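/- arXiv:1506.06041 — 3 statements merged into one kernel-verified Lean document; each statement's English description precedes it below -/
import Mathlib

section
/- Let G be a Δ-regular finite simple graph of order n and size m with Δ ≥ 3 and 2Δ ≤ n ≤ 2Δ+1. Then n ≤ A_{Δ−2}(G) ≤ n + m + 2. -/
open Polynomial Finset

/-- Number of neighbors of `v` inside the set `S` (denoted δ_S(v)). -/
def SimpleGraph.degIn {V : Type*} [Fintype V] [DecidableEq V]
    (G : SimpleGraph V) [DecidableRel G.Adj] (S : Finset V) (v : V) : ℕ :=
  (S.filter (fun u => G.Adj v u)).card

/-- Number of neighbors of `v` outside the set `S` (denoted δ_{S̄}(v)). -/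
def SimpleGraph.degOut {V : Type*} [Fintype V] [DecidableEq V]
    (G : SimpleGraph V) [DecidableRel G.Adj] (S : Finset V) (v : V) : ℕ :=
  (Sᶜ.filter (fun u => G.Adj v u)).card

/-- `S` is an exact defensive `k`-alliance in `G`: the induced subgraph `⟨S⟩` is connected
(in particular `S` is nonempty) and `k = k_S = min_{v ∈ S} (δ_S(v) - δ_{S̄}(v))`. -/
def SimpleGraph.IsExactAlliance {V : Type*} [Fintype V] [DecidableEq V]
    (G : SimpleGraph V) [DecidableRel G.Adj] (S : Finset V) (k : ℤ) : Prop :=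
  (G.induce (S : Set V)).Connected ∧
    (∀ v ∈ S, k ≤ (G.degIn S v : ℤ) - (G.degOut S v : ℤ)) ∧
    (∃ v ∈ S, (G.degIn S v : ℤ) - (G.degOut S v : ℤ) = k)

/-- `A_k(G)`: the number of exact defensive `k`-alliances in `G`. -/
noncomputable def SimpleGraph.allianceCoeff {V : Type*} [Fintype V] [DecidableEq V]
    (G : SimpleGraph V) [DecidableRel G.Adj] (k : ℤ) : ℕ :=
  Set.ncard {S : Finset V | G.IsExactAlliance S k}

/-- The alliance polynomial `A(G;x) = Σ_{k=-Δ}^{Δ} A_k(G) x^{n+k}`, where `n` is the order and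
`Δ` the maximum degree of `G`, regarded as a real polynomial. -/
noncomputable def SimpleGraph.alliancePoly {V : Type*} [Fintype V] [DecidableEq V]
    (G : SimpleGraph V) [DecidableRel G.Adj] : Polynomial ℝ :=
  ∑ k ∈ Finset.Icc (-(G.maxDegree : ℤ)) (G.maxDegree : ℤ),
    (G.allianceCoeff k : ℝ) • X ^ (((Fintype.card V : ℤ) + k).toNat)


namespace SimpleGraph
variable {V : Type*} [Fintype V] [DecidableEq V] (G : SimpleGraph V) [DecidableRel G.Adj]

lemma degOut_eq_degIn_compl (S : Finset V) (v : V) : G.degOut S v = G.degIn Sᶜ v := rfl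

lemma degIn_add_degIn_compl {Δ : ℕ} (hreg : G.IsRegularOfDegree Δ) (S : Finset V) (v : V) :
    G.degIn S v + G.degIn Sᶜ v = Δ := by
  have h1 : S.filter (fun u => G.Adj v u) ∪ Sᶜ.filter (fun u => G.Adj v u)
      = Finset.univ.filter (fun u => G.Adj v u) := by
    rw [← Finset.filter_union, Finset.union_compl]
  have h2 : Disjoint (S.filter (fun u => G.Adj v u)) (Sᶜ.filter (fun u => G.Adj v u)) :=
    (Finset.disjoint_filter_filter (disjoint_compl_right)).mono le_rfl le_rfl
  have h3 : (Finset.univ.filter (fun u => G.Adj v u)) = G.neighborFinset v := by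
    ext u; simp [neighborFinset]
  have := Finset.card_union_of_disjoint h2
  rw [h1, h3] at this
  rw [degIn, degIn, ← this]; exact hreg v

/-- double counting of cross edges -/
lemma sum_degIn_comm (A B : Finset V) :
    ∑ a ∈ A, G.degIn B a = ∑ b ∈ B, G.degIn A b := by
  simp only [degIn, Finset.card_filter]
  rw [Finset.sum_comm]
  congr 1; ext b; congr 1; ext a
  simp only [G.adj_comm a b]

lemma degIn_le_card_pred {T : Finset V} {v : V} (hv : v ∈ T) : G.degIn T v ≤ T.card - 1 := by
  have h : T.filter (fun u => G.Adj v u) ⊆ T.erase v := by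
    intro u hu
    simp only [Finset.mem_filter] at hu
    exact Finset.mem_erase.2 ⟨fun h => G.irrefl (h ▸ hu.2), hu.1⟩
  calc G.degIn T v ≤ (T.erase v).card := Finset.card_le_card h
  _ = T.card - 1 := Finset.card_erase_of_mem hv

lemma even_sum_degIn (T : Finset V) : Even (∑ v ∈ T, G.degIn T v) := by
  classical
  induction T using Finset.induction_on with
  | empty => simp
  | @insert a T ha ih =>
    have hsplit : ∀ u ∈ T, G.degIn (insert a T) u = G.degIn T u + (if G.Adj u a then 1 else 0) := by
      intro u hu
      simp only [degIn, Finset.filter_insert]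
      by_cases h : G.Adj u a
      · rw [if_pos h, Finset.card_insert_of_notMem (fun hmem => ha ((Finset.mem_filter.1 hmem).1)), if_pos h]
      · rw [if_neg h, if_neg h, Nat.add_zero]
    have hA : G.degIn (insert a T) a = G.degIn T a := by
      simp only [degIn, Finset.filter_insert, if_neg (G.irrefl (v := a))]
    rw [Finset.sum_insert ha, hA, Finset.sum_congr rfl hsplit, Finset.sum_add_distrib]
    have hswap : G.degIn T a = ∑ u ∈ T, (if G.Adj u a then 1 else 0) := by
      rw [degIn, Finset.card_filter]
      exact Finset.sum_congr rfl (fun u _ => by simp [G.adj_comm a u])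
    rw [hswap]
    have := ih
    rcases this with ⟨c, hc⟩
    exact ⟨∑ u ∈ T, (if G.Adj u a then 1 else 0) + c, by omega⟩


/-- Key combinatorial step: in a Δ-regular graph with 2Δ ≤ n ≤ 2Δ+1, any two vertices distinct
from `w` are joined by a path of length ≤ 3 avoiding `w`. -/
lemma path_avoiding {Δ : ℕ} (hreg : G.IsRegularOfDegree Δ) (hΔ : 3 ≤ Δ)
    (h1 : 2 * Δ ≤ Fintype.card V) (h2 : Fintype.card V ≤ 2 * Δ + 1)
    {u v w : V} (hu : u ≠ w) (hv : v ≠ w) (huv : u ≠ v) :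
    G.Adj u v ∨ (∃ x, x ≠ w ∧ G.Adj u x ∧ G.Adj x v) ∨
      (∃ x y, x ≠ w ∧ y ≠ w ∧ G.Adj u x ∧ G.Adj x y ∧ G.Adj y v) := by
  by_cases hadj : G.Adj u v
  · exact Or.inl hadj
  by_cases hC : ∃ x, x ≠ w ∧ G.Adj u x ∧ G.Adj x v
  · exact Or.inr (Or.inl hC)
  right; right
  by_contra hno
  push_neg at hno
  have hdeg : ∀ x : V, (G.neighborFinset x).card = Δ := fun x => hreg x
  set A := (G.neighborFinset u).erase w with hA_def
  set B := (G.neighborFinset v).erase w with hB_def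
  have hxA : ∀ x ∈ A, x ≠ w ∧ G.Adj u x := by
    intro x hx
    rw [hA_def, Finset.mem_erase, SimpleGraph.mem_neighborFinset] at hx
    exact ⟨hx.1, hx.2⟩
  have hxB : ∀ x ∈ B, x ≠ w ∧ G.Adj v x := by
    intro x hx
    rw [hB_def, Finset.mem_erase, SimpleGraph.mem_neighborFinset] at hx
    exact ⟨hx.1, hx.2⟩
  have hcardA : Δ - 1 ≤ A.card := by
    have h := Finset.card_erase_le (a := w) (s := G.neighborFinset u)
    by_cases hw : w ∈ G.neighborFinset u
    · rw [hA_def, Finset.card_erase_of_mem hw, hdeg u]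
    · rw [hA_def, Finset.erase_eq_of_notMem hw, hdeg u]; omega
  have hcardB : Δ - 1 ≤ B.card := by
    by_cases hw : w ∈ G.neighborFinset v
    · rw [hB_def, Finset.card_erase_of_mem hw, hdeg v]
    · rw [hB_def, Finset.erase_eq_of_notMem hw, hdeg v]; omega
  have hAB : Disjoint A B := by
    rw [Finset.disjoint_left]
    intro x hxa hxb
    exact hC ⟨x, (hxA x hxa).1, (hxA x hxa).2, ((hxB x hxb).2).symm⟩
  have huA : u ∉ A := fun h => G.irrefl (hxA u h).2
  have hvA : v ∉ A := fun h => hadj (hxA v h).2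
  have hwA : w ∉ A := fun h => (hxA w h).1 rfl
  have huB : u ∉ B := fun h => hadj ((hxB u h).2).symm
  have hvB : v ∉ B := fun h => G.irrefl (hxB v h).2
  have hwB : w ∉ B := fun h => (hxB w h).1 rfl
  -- the union A ∪ B ∪ {u,v,w} has card |A|+|B|+3
  have hdisj2 : Disjoint (A ∪ B) ({u, v, w} : Finset V) := by
    rw [Finset.disjoint_right]
    intro x hx hx2
    rcases Finset.mem_insert.1 hx with rfl | hx'
    · rcases Finset.mem_union.1 hx2 with h | h
      · exact huA h
      · exact huB h
    · rcases Finset.mem_insert.1 hx' with rfl | hx''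
      · rcases Finset.mem_union.1 hx2 with h | h
        · exact hvA h
        · exact hvB h
      · rw [Finset.mem_singleton] at hx''
        subst hx''
        rcases Finset.mem_union.1 hx2 with h | h
        · exact hwA h
        · exact hwB h
  have hcard3 : ({u, v, w} : Finset V).card = 3 := by
    rw [Finset.card_insert_of_notMem, Finset.card_insert_of_notMem, Finset.card_singleton]
    · simpa using hv
    · simp only [Finset.mem_insert, Finset.mem_singleton]
      push_neg
      exact ⟨huv, hu⟩
  set U := (A ∪ B) ∪ ({u, v, w} : Finset V) with hU_def
  have hcardU : U.card = A.card + B.card + 3 := by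
    rw [hU_def, Finset.card_union_of_disjoint hdisj2, Finset.card_union_of_disjoint hAB, hcard3]
  have hUle : U.card ≤ Fintype.card V := Finset.card_le_univ U
  have hAeq : A.card = Δ - 1 ∧ B.card = Δ - 1 ∧ U.card = Fintype.card V := by
    have hAd : A.card ≤ Δ := by
      rw [hA_def]
      calc ((G.neighborFinset u).erase w).card ≤ (G.neighborFinset u).card :=
        Finset.card_erase_le
      _ = Δ := hdeg u
    have hBd : B.card ≤ Δ := by
      rw [hB_def]
      calc ((G.neighborFinset v).erase w).card ≤ (G.neighborFinset v).card :=
        Finset.card_erase_le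
      _ = Δ := hdeg v
    omega
  have hUuniv : U = Finset.univ := Finset.eq_univ_of_card U hAeq.2.2
  -- w is adjacent to u and v
  have hwu : G.Adj u w := by
    by_contra hc
    have : w ∉ G.neighborFinset u := by rwa [SimpleGraph.mem_neighborFinset]
    rw [hA_def, Finset.erase_eq_of_notMem this, hdeg u] at hAeq
    omega
  have hwv : G.Adj v w := by
    by_contra hc
    have hniB : w ∉ G.neighborFinset v := by rwa [SimpleGraph.mem_neighborFinset]
    have : B.card = Δ := by rw [hB_def, Finset.erase_eq_of_notMem hniB, hdeg v]
    omega
  -- every x ∈ A is adjacent to w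
  have hAadjw : ∀ x ∈ A, G.Adj x w := by
    intro x hx
    by_contra hxw
    have hNx : G.neighborFinset x ⊆ (A.erase x) ∪ {u} := by
      intro y hy
      have hxy : G.Adj x y := (SimpleGraph.mem_neighborFinset G x y).1 hy
      have hyU : y ∈ U := hUuniv ▸ Finset.mem_univ y
      rw [hU_def] at hyU
      rcases Finset.mem_union.1 hyU with hyAB | hyuvw
      · rcases Finset.mem_union.1 hyAB with hyA | hyB
        · refine Finset.mem_union.2 (Or.inl (Finset.mem_erase.2 ⟨?_, hyA⟩))
          intro h; exact G.irrefl (h ▸ hxy)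
        · exact absurd ((hxB y hyB).2.symm)
            (hno x y (hxA x hx).1 (hxB y hyB).1 (hxA x hx).2 hxy)
      · rcases Finset.mem_insert.1 hyuvw with rfl | hyvw
        · exact Finset.mem_union.2 (Or.inr (Finset.mem_singleton_self y))
        · rcases Finset.mem_insert.1 hyvw with rfl | hyw
          · exact absurd ⟨x, (hxA x hx).1, (hxA x hx).2, hxy⟩ hC
          · rw [Finset.mem_singleton] at hyw
            subst hyw
            exact absurd hxy hxw
    have hcc : Δ ≤ (A.erase x).card + 1 := by
      calc Δ = (G.neighborFinset x).card := (hdeg x).symm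
      _ ≤ ((A.erase x) ∪ {u}).card := Finset.card_le_card hNx
      _ ≤ (A.erase x).card + ({u} : Finset V).card := Finset.card_union_le _ _
      _ = (A.erase x).card + 1 := by rw [Finset.card_singleton]
    rw [Finset.card_erase_of_mem hx] at hcc
    omega
  -- so N(w) contains A ∪ {u, v}, which is too big
  have hsub : A ∪ {u, v} ⊆ G.neighborFinset w := by
    intro y hy
    rcases Finset.mem_union.1 hy with hyA | hyuv
    · exact (SimpleGraph.mem_neighborFinset G w y).2 (hAadjw y hyA).symm
    · rcases Finset.mem_insert.1 hyuv with rfl | hyv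
      · exact (SimpleGraph.mem_neighborFinset G w y).2 hwu.symm
      · rw [Finset.mem_singleton] at hyv
        subst hyv
        exact (SimpleGraph.mem_neighborFinset G w y).2 hwv.symm
  have hdisjAuv : Disjoint A ({u, v} : Finset V) := by
    rw [Finset.disjoint_right]
    intro y hy hyA
    rcases Finset.mem_insert.1 hy with rfl | hyv
    · exact huA hyA
    · rw [Finset.mem_singleton] at hyv; subst hyv; exact hvA hyA
  have hfin : A.card + 2 ≤ Δ := by
    calc A.card + 2 = A.card + ({u, v} : Finset V).card := by
          rw [Finset.card_insert_of_notMem (by simpa using huv), Finset.card_singleton]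
    _ = (A ∪ {u, v}).card := (Finset.card_union_of_disjoint hdisjAuv).symm
    _ ≤ (G.neighborFinset w).card := Finset.card_le_card hsub
    _ = Δ := hdeg w
  omega

lemma connected_induce_compl_singleton {Δ : ℕ} (hreg : G.IsRegularOfDegree Δ) (hΔ : 3 ≤ Δ)
    (h1 : 2 * Δ ≤ Fintype.card V) (h2 : Fintype.card V ≤ 2 * Δ + 1) (w : V) :
    (G.induce ((({w}ᶜ : Finset V) : Finset V) : Set V)).Connected := by
  have hnt : Nontrivial V := Fintype.one_lt_card_iff_nontrivial.mp (by omega)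
  rw [SimpleGraph.connected_iff]
  constructor
  · rintro ⟨u, hu⟩ ⟨v, hv⟩
    have hu' : u ≠ w := by simpa using hu
    have hv' : v ≠ w := by simpa using hv
    by_cases huv : u = v
    · subst huv; rfl
    have hmem : ∀ x : V, x ≠ w → x ∈ ((({w}ᶜ : Finset V) : Finset V) : Set V) := by
      intro x hx; simpa using hx
    rcases G.path_avoiding hreg hΔ h1 h2 hu' hv' huv with hadj | ⟨x, hxw, hux, hxv⟩ |
        ⟨x, y, hxw, hyw, hux, hxy, hyv⟩
    · exact (SimpleGraph.Adj.reachable (by exact hadj :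
        (G.induce _).Adj ⟨u, hu⟩ ⟨v, hv⟩))
    · exact (SimpleGraph.Adj.reachable (by exact hux :
        (G.induce _).Adj ⟨u, hu⟩ ⟨x, hmem x hxw⟩)).trans
        (SimpleGraph.Adj.reachable (by exact hxv :
        (G.induce _).Adj ⟨x, hmem x hxw⟩ ⟨v, hv⟩))
    · exact ((SimpleGraph.Adj.reachable (by exact hux :
        (G.induce _).Adj ⟨u, hu⟩ ⟨x, hmem x hxw⟩)).trans
        (SimpleGraph.Adj.reachable (by exact hxy :
        (G.induce _).Adj ⟨x, hmem x hxw⟩ ⟨y, hmem y hyw⟩))).trans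
        (SimpleGraph.Adj.reachable (by exact hyv :
        (G.induce _).Adj ⟨y, hmem y hyw⟩ ⟨v, hv⟩))
  · obtain ⟨u, hu⟩ := exists_ne w
    exact ⟨⟨u, by simpa using hu⟩⟩

lemma compl_singleton_isAlliance {Δ : ℕ} (hreg : G.IsRegularOfDegree Δ) (hΔ : 3 ≤ Δ)
    (h1 : 2 * Δ ≤ Fintype.card V) (h2 : Fintype.card V ≤ 2 * Δ + 1) (w : V) :
    G.IsExactAlliance ({w}ᶜ : Finset V) ((Δ : ℤ) - 2) := by
  refine ⟨G.connected_induce_compl_singleton hreg hΔ h1 h2 w, ?_, ?_⟩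
  · intro v hv
    have hsum := G.degIn_add_degIn_compl hreg ({w}ᶜ : Finset V) v
    rw [compl_compl] at hsum
    have hle : G.degIn ({w} : Finset V) v ≤ 1 := by
      calc G.degIn ({w} : Finset V) v ≤ ({w} : Finset V).card :=
        Finset.card_le_card (Finset.filter_subset _ _)
      _ = 1 := Finset.card_singleton w
    rw [degOut_eq_degIn_compl, compl_compl]
    omega
  · have hne : (G.neighborFinset w).Nonempty := by
      rw [← Finset.card_pos]
      have hd : (G.neighborFinset w).card = Δ := hreg w
      omega
    obtain ⟨v, hv⟩ := hne
    have hadj : G.Adj v w := ((SimpleGraph.mem_neighborFinset G w v).1 hv).symm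
    have hvw : v ≠ w := fun h => G.irrefl (h ▸ hadj)
    refine ⟨v, by simpa using hvw, ?_⟩
    have hsum := G.degIn_add_degIn_compl hreg ({w}ᶜ : Finset V) v
    rw [compl_compl] at hsum
    have hone : G.degIn ({w} : Finset V) v = 1 := by
      rw [degIn]
      have : ({w} : Finset V).filter (fun u => G.Adj v u) = {w} := by
        rw [Finset.filter_singleton, if_pos hadj]
      rw [this, Finset.card_singleton]
    rw [degOut_eq_degIn_compl, compl_compl, hone]
    omega

lemma alliance_degIn_compl_le_one {Δ : ℕ} (hreg : G.IsRegularOfDegree Δ) {S : Finset V}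
    (h : G.IsExactAlliance S ((Δ : ℤ) - 2)) : ∀ v ∈ S, G.degIn Sᶜ v ≤ 1 := by
  intro v hv
  have h2 := h.2.1 v hv
  rw [degOut_eq_degIn_compl] at h2
  have h3 := G.degIn_add_degIn_compl hreg S v
  omega

lemma alliance_nonempty {S : Finset V} {k : ℤ} (h : G.IsExactAlliance S k) : S.Nonempty := by
  obtain ⟨⟨v, hv⟩⟩ := h.1.nonempty
  exact ⟨v, by simpa using hv⟩

lemma alliance_compl_nonempty {Δ : ℕ} (hreg : G.IsRegularOfDegree Δ) {S : Finset V}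
    (h : G.IsExactAlliance S ((Δ : ℤ) - 2)) : Sᶜ.Nonempty := by
  by_contra hc
  rw [Finset.not_nonempty_iff_eq_empty] at hc
  obtain ⟨v, hv, hval⟩ := h.2.2
  have h3 := G.degIn_add_degIn_compl hreg S v
  rw [degOut_eq_degIn_compl, hc] at hval
  rw [hc] at h3
  simp only [degIn, Finset.filter_empty, Finset.card_empty] at hval h3
  omega

lemma lower_bound {Δ : ℕ} (hreg : G.IsRegularOfDegree Δ) (hΔ : 3 ≤ Δ)
    (h1 : 2 * Δ ≤ Fintype.card V) (h2 : Fintype.card V ≤ 2 * Δ + 1) :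
    Fintype.card V ≤ G.allianceCoeff ((Δ : ℤ) - 2) := by
  classical
  rw [allianceCoeff]
  have hset : {S : Finset V | G.IsExactAlliance S ((Δ : ℤ) - 2)}
      = (↑(Finset.univ.filter (fun S => G.IsExactAlliance S ((Δ : ℤ) - 2))) : Set (Finset V)) := by
    ext S; simp
  rw [hset, Set.ncard_coe_finset]
  have hinj : Function.Injective (fun w : V => ({w}ᶜ : Finset V)) := by
    intro a b h
    simpa using congrArg (fun s : Finset V => sᶜ) h
  have hsub : Finset.univ.image (fun w : V => ({w}ᶜ : Finset V))
      ⊆ Finset.univ.filter (fun S => G.IsExactAlliance S ((Δ : ℤ) - 2)) := by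
    intro S hS
    obtain ⟨w, _, rfl⟩ := Finset.mem_image.1 hS
    exact Finset.mem_filter.2 ⟨Finset.mem_univ _, G.compl_singleton_isAlliance hreg hΔ h1 h2 w⟩
  calc Fintype.card V = (Finset.univ : Finset V).card := (Finset.card_univ).symm
  _ = (Finset.univ.image (fun w : V => ({w}ᶜ : Finset V))).card :=
      (Finset.card_image_of_injective _ hinj).symm
  _ ≤ _ := Finset.card_le_card hsub

/-- helper: if all terms are ≤ c and the sum is maximal then all terms equal c -/
lemma sum_maxed {α : Type*} [DecidableEq α] {T : Finset α} {f : α → ℕ} {c : ℕ}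
    (hle : ∀ u ∈ T, f u ≤ c) (hsum : ∑ u ∈ T, f u = T.card * c) :
    ∀ u ∈ T, f u = c := by
  intro u hu
  by_contra hne
  have hlt : f u < c := lt_of_le_of_ne (hle u hu) hne
  have h1 : ∑ x ∈ T.erase u, f x ≤ (T.erase u).card * c := by
    have := Finset.sum_le_card_nsmul (T.erase u) f c
      (fun x hx => hle x (Finset.mem_of_mem_erase hx))
    simpa [smul_eq_mul] using this
  have h2 : f u + ∑ x ∈ T.erase u, f x = ∑ x ∈ T, f x := Finset.add_sum_erase T f hu
  have h3 : (T.erase u).card = T.card - 1 := Finset.card_erase_of_mem hu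
  have h4 : 1 ≤ T.card := Finset.card_pos.2 ⟨u, hu⟩
  rw [h3] at h1
  have h5 : (T.card - 1) * c + c = T.card * c := by
    have : T.card - 1 + 1 = T.card := by omega
    calc (T.card - 1) * c + c = (T.card - 1 + 1) * c := by ring
    _ = T.card * c := by rw [this]
  omega

lemma clique_of_degIn {S : Finset V} (h : ∀ v ∈ S, S.card - 1 ≤ G.degIn S v) :
    ∀ u ∈ S, ∀ v ∈ S, u ≠ v → G.Adj u v := by
  intro u hu v hv huv
  have hsub : S.filter (fun x => G.Adj u x) ⊆ S.erase u := by
    intro x hx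
    simp only [Finset.mem_filter] at hx
    exact Finset.mem_erase.2 ⟨fun hh => G.irrefl (hh ▸ hx.2), hx.1⟩
  have heq : S.filter (fun x => G.Adj u x) = S.erase u := by
    apply Finset.eq_of_subset_of_card_le hsub
    rw [Finset.card_erase_of_mem hu]
    exact h u hu
  have : v ∈ S.filter (fun x => G.Adj u x) := by
    rw [heq]; exact Finset.mem_erase.2 ⟨fun hh => huv hh.symm, hv⟩
  exact (Finset.mem_filter.1 this).2

/-- `K` is a clique of size `Δ`. -/
def IsClqD (Δ : ℕ) (K : Finset V) : Prop :=
  K.card = Δ ∧ ∀ u ∈ K, ∀ v ∈ K, u ≠ v → G.Adj u v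

/-- `T` is a triangle such that every vertex outside `T` has at most one neighbor in `T`. -/
def IsVTri (T : Finset V) : Prop :=
  T.card = 3 ∧ (∀ u ∈ T, ∀ v ∈ T, u ≠ v → G.Adj u v) ∧ ∀ v, v ∉ T → G.degIn T v ≤ 1

lemma alliance_classify {Δ : ℕ} (hreg : G.IsRegularOfDegree Δ) (hΔ : 3 ≤ Δ)
    (h1 : 2 * Δ ≤ Fintype.card V) (h2 : Fintype.card V ≤ 2 * Δ + 1)
    {S : Finset V} (h : G.IsExactAlliance S ((Δ : ℤ) - 2)) (ht : 3 ≤ Sᶜ.card) :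
    (G.IsVTri Sᶜ) ∨ (G.IsClqD Δ S) ∨ (G.IsClqD Δ Sᶜ) := by
  have F1 : ∀ v ∈ S, G.degIn Sᶜ v ≤ 1 := G.alliance_degIn_compl_le_one hreg h
  have hst : S.card + Sᶜ.card = Fintype.card V := Finset.card_add_card_compl S
  -- S has at least Δ vertices
  have hsΔ : Δ ≤ S.card := by
    obtain ⟨v, hv⟩ := G.alliance_nonempty h
    have hd1 := G.degIn_add_degIn_compl hreg S v
    have hd2 := G.degIn_le_card_pred (T := S) (v := v) hv
    have := F1 v hv
    have hS1 : 1 ≤ S.card := Finset.card_pos.2 ⟨v, hv⟩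
    omega
  -- min degree within S
  have hmin : ∀ v ∈ S, Δ - 1 ≤ G.degIn S v := by
    intro v hv
    have hd1 := G.degIn_add_degIn_compl hreg S v
    have := F1 v hv
    omega
  -- cross edge count
  have hC : ∑ u ∈ Sᶜ, G.degIn S u ≤ S.card := by
    rw [← G.sum_degIn_comm]
    have := Finset.sum_le_card_nsmul S (fun v => G.degIn Sᶜ v) 1 F1
    simpa [smul_eq_mul] using this
  have hsplit : ∑ u ∈ Sᶜ, (G.degIn S u + G.degIn Sᶜ u) = Sᶜ.card * Δ := by
    rw [Finset.sum_congr rfl (fun u _ => G.degIn_add_degIn_compl hreg S u)]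
    rw [Finset.sum_const, smul_eq_mul]
  have hsum_split : ∑ u ∈ Sᶜ, G.degIn S u + ∑ u ∈ Sᶜ, G.degIn Sᶜ u = Sᶜ.card * Δ := by
    rw [← Finset.sum_add_distrib]; exact hsplit
  have hDTle : ∑ u ∈ Sᶜ, G.degIn Sᶜ u ≤ Sᶜ.card * (Sᶜ.card - 1) := by
    have := Finset.sum_le_card_nsmul Sᶜ (fun u => G.degIn Sᶜ u) (Sᶜ.card - 1)
      (fun u hu => G.degIn_le_card_pred hu)
    simpa [smul_eq_mul] using this
  have hDTeven : Even (∑ u ∈ Sᶜ, G.degIn Sᶜ u) := G.even_sum_degIn Sᶜ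
  rcases Nat.lt_or_ge Sᶜ.card 4 with ht3 | ht4
  · -- t = 3 : triangle case
    left
    have ht3' : Sᶜ.card = 3 := by omega
    have hDTle' : ∀ u ∈ Sᶜ, G.degIn Sᶜ u ≤ 2 := by
      intro u hu
      have := G.degIn_le_card_pred hu
      omega
    have hDT6 : ∑ u ∈ Sᶜ, G.degIn Sᶜ u = Sᶜ.card * 2 := by
      rw [ht3'] at hsum_split ⊢
      rw [Nat.even_iff] at hDTeven
      have hb : ∑ u ∈ Sᶜ, G.degIn Sᶜ u ≤ 6 := by
        have := Finset.sum_le_card_nsmul Sᶜ (fun u => G.degIn Sᶜ u) 2 hDTle'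
        simp only [smul_eq_mul, ht3'] at this
        omega
      omega
    have hall2 := sum_maxed hDTle' hDT6
    refine ⟨ht3', ?_, fun v hv => F1 v (by simpa using hv)⟩
    · apply G.clique_of_degIn
      intro v hv
      rw [ht3']
      have := hall2 v hv
      omega
  · -- t ≥ 4 : clique cases
    right
    have htle : Sᶜ.card ≤ Δ + 1 := by omega
    -- basic inequality t*Δ ≤ t*(t-1) + s
    have hkey : Sᶜ.card * Δ ≤ Sᶜ.card * (Sᶜ.card - 1) + S.card := by omega
    have htge : Δ ≤ Sᶜ.card := by
      by_contra hcon
      push_neg at hcon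
      -- Δ ≥ t + 1, t ≥ 4 : contradiction
      have h4 : (4 : ℤ) ≤ (Sᶜ.card : ℤ) := by exact_mod_cast ht4
      have hD : (Sᶜ.card : ℤ) + 1 ≤ (Δ : ℤ) := by exact_mod_cast hcon
      have hk : (Sᶜ.card : ℤ) * Δ ≤ Sᶜ.card * (Sᶜ.card - 1) + S.card := by
        have := hkey
        have hc1 : ((Sᶜ.card * (Sᶜ.card - 1) : ℕ) : ℤ) = (Sᶜ.card : ℤ) * (Sᶜ.card - 1) := by
          push_cast [Nat.cast_sub (by omega : 1 ≤ Sᶜ.card)]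
          ring
        exact_mod_cast by
          calc ((Sᶜ.card * Δ : ℕ) : ℤ) ≤ ((Sᶜ.card * (Sᶜ.card - 1) + S.card : ℕ) : ℤ) := by
                exact_mod_cast this
          _ = (Sᶜ.card : ℤ) * (Sᶜ.card - 1) + S.card := by rw [Nat.cast_add, hc1]
      have hs' : (S.card : ℤ) ≤ 2 * Δ + 1 - Sᶜ.card := by
        have : (S.card : ℤ) + Sᶜ.card = Fintype.card V := by exact_mod_cast hst
        have h2' : (Fintype.card V : ℤ) ≤ 2 * Δ + 1 := by exact_mod_cast h2
        omega
      nlinarith [hk, hs', hD, h4]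
    -- now t = Δ or t = Δ + 1
    rcases Nat.eq_or_lt_of_le htge with htD | htD1
    · -- t = Δ
      have hs_val : S.card = Fintype.card V - Δ := by omega
      rcases Nat.eq_or_lt_of_le hsΔ with hsD | hsD1
      · -- s = Δ : S is a clique
        left
        refine ⟨hsD.symm, G.clique_of_degIn ?_⟩
        intro v hv
        have := hmin v hv
        omega
      · -- s = Δ + 1, T is a clique
        right
        have hsD' : S.card = Δ + 1 := by omega
        have hge : Sᶜ.card * (Sᶜ.card - 1) ≤ ∑ u ∈ Sᶜ, G.degIn Sᶜ u := by
          -- DT ≥ t*Δ - s = Δ² - Δ - 1, and DT even, Δ(Δ-1) even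
          have heven2 : Even (Sᶜ.card * (Sᶜ.card - 1)) := by
            rcases Nat.even_or_odd Sᶜ.card with he | ho
            · exact he.mul_right _
            · have : Even (Sᶜ.card - 1) := by
                rw [Nat.even_sub (by omega)]
                simp [Nat.not_even_iff_odd.2 ho]
              exact this.mul_left _
          rw [Nat.even_iff] at hDTeven heven2
          -- t*Δ = C + DT ≤ s + DT, so DT ≥ t*Δ - s = t*(t-1) + (Δ - s + ... )
          -- here t = Δ, s = Δ+1: t*Δ = t*(t-1) + t, so DT ≥ t*(t-1) - 1
          have htt : Sᶜ.card * Δ = Sᶜ.card * (Sᶜ.card - 1) + Sᶜ.card := by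
            rw [htD]
            have h1' : 1 ≤ Sᶜ.card := by omega
            calc Sᶜ.card * Sᶜ.card = Sᶜ.card * (Sᶜ.card - 1 + 1) := by rw [Nat.sub_add_cancel h1']
            _ = Sᶜ.card * (Sᶜ.card - 1) + Sᶜ.card := by ring
          omega
        have hall := sum_maxed (fun u hu => G.degIn_le_card_pred hu)
          (le_antisymm hDTle hge)
        refine ⟨by omega, G.clique_of_degIn ?_⟩
        intro v hv
        rw [hall v hv]
    · -- t = Δ + 1, so s = Δ and S is a clique
      left
      have htD' : Sᶜ.card = Δ + 1 := by omega
      have hsD : S.card = Δ := by omega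
      refine ⟨hsD, G.clique_of_degIn ?_⟩
      intro v hv
      have := hmin v hv
      omega

/-- a valid triangle cannot share two vertices with another (≥ 3)-clique -/
lemma vtri_clique_no_shared_pair {T M : Finset V} (hT : G.IsVTri T)
    (hMcl : ∀ u ∈ M, ∀ v ∈ M, u ≠ v → G.Adj u v) (hcard : T.card ≤ M.card) (hne : M ≠ T)
    {u v : V} (huT : u ∈ T) (hvT : v ∈ T) (huM : u ∈ M) (hvM : v ∈ M) (huv : u ≠ v) : False := by
  have hMnS : ¬ M ⊆ T := fun hsub => hne (Finset.eq_of_subset_of_card_le hsub hcard)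
  obtain ⟨y, hyM, hyT⟩ := Finset.not_subset.1 hMnS
  have hyu : y ≠ u := fun h => hyT (h ▸ huT)
  have hyv : y ≠ v := fun h => hyT (h ▸ hvT)
  have hsub : ({u, v} : Finset V) ⊆ T.filter (fun p => G.Adj y p) := by
    intro p hp
    rcases Finset.mem_insert.1 hp with rfl | hp'
    · exact Finset.mem_filter.2 ⟨huT, hMcl y hyM p huM hyu⟩
    · rw [Finset.mem_singleton] at hp'
      subst hp'
      exact Finset.mem_filter.2 ⟨hvT, hMcl y hyM p hvM hyv⟩
  have h2 : 2 ≤ G.degIn T y := by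
    calc 2 = ({u, v} : Finset V).card := by
          rw [Finset.card_insert_of_notMem (by simpa using huv), Finset.card_singleton]
    _ ≤ _ := Finset.card_le_card hsub
  have := hT.2.2 y hyT
  omega

/-- two distinct Δ-cliques cannot share two vertices -/
lemma clq_no_shared_pair {Δ : ℕ} (hreg : G.IsRegularOfDegree Δ) (hΔ : 3 ≤ Δ)
    (h1 : 2 * Δ ≤ Fintype.card V) (h2 : Fintype.card V ≤ 2 * Δ + 1)
    {K1 K2 : Finset V} (hK1 : G.IsClqD Δ K1) (hK2 : G.IsClqD Δ K2) (hne : K1 ≠ K2)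
    {u v : V} (hu1 : u ∈ K1) (hu2 : u ∈ K2) (hv1 : v ∈ K1) (hv2 : v ∈ K2) (huv : u ≠ v) :
    False := by
  have hdeg : ∀ x : V, (G.neighborFinset x).card = Δ := fun x => hreg x
  -- step 1: the intersection has exactly Δ - 1 elements
  have hsubN : (K1.erase u) ∪ (K2.erase u) ⊆ G.neighborFinset u := by
    intro p hp
    rcases Finset.mem_union.1 hp with hp' | hp' <;>
      rw [Finset.mem_erase] at hp' <;> rw [SimpleGraph.mem_neighborFinset]
    · exact hK1.2 u hu1 p hp'.2 (Ne.symm hp'.1)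
    · exact hK2.2 u hu2 p hp'.2 (Ne.symm hp'.1)
  have hWcard : (K1 ∩ K2).card = Δ - 1 := by
    have hcup := Finset.card_union_add_card_inter (K1.erase u) (K2.erase u)
    have hiner : (K1.erase u) ∩ (K2.erase u) = (K1 ∩ K2).erase u := by
      ext p; simp only [Finset.mem_inter, Finset.mem_erase]; tauto
    rw [hiner, Finset.card_erase_of_mem (Finset.mem_inter.2 ⟨hu1, hu2⟩),
      Finset.card_erase_of_mem hu1, Finset.card_erase_of_mem hu2, hK1.1, hK2.1] at hcup
    have hUle : (K1.erase u ∪ K2.erase u).card ≤ Δ :=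
      le_trans (Finset.card_le_card hsubN) (le_of_eq (hdeg u))
    have hIle : (K1 ∩ K2).card ≤ Δ := by
      rw [← hK1.1]; exact Finset.card_le_card Finset.inter_subset_left
    have hInotD : (K1 ∩ K2).card ≠ Δ := by
      intro hI
      have e1 : K1 ∩ K2 = K1 := Finset.eq_of_subset_of_card_le Finset.inter_subset_left
        (by rw [hK1.1, hI])
      have e2 : K1 ∩ K2 = K2 := Finset.eq_of_subset_of_card_le Finset.inter_subset_right
        (by rw [hK2.1, hI])
      exact hne (e1.symm.trans e2)
    have hI1 : 1 ≤ (K1 ∩ K2).card := Finset.card_pos.2 ⟨u, Finset.mem_inter.2 ⟨hu1, hu2⟩⟩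
    omega
  set W := K1 ∩ K2 with hW_def
  have hWK1 : W ⊆ K1 := Finset.inter_subset_left
  have hWK2 : W ⊆ K2 := Finset.inter_subset_right
  -- extract x and y
  have hx_card : (K1 \ W).card = 1 := by
    rw [Finset.card_sdiff_of_subset hWK1, hK1.1, hWcard]; omega
  have hy_card : (K2 \ W).card = 1 := by
    rw [Finset.card_sdiff_of_subset hWK2, hK2.1, hWcard]; omega
  obtain ⟨x, hx⟩ := Finset.card_eq_one.1 hx_card
  obtain ⟨y, hy⟩ := Finset.card_eq_one.1 hy_card
  have hxK1 : x ∈ K1 ∧ x ∉ W := by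
    have : x ∈ K1 \ W := hx ▸ Finset.mem_singleton_self x
    exact ⟨(Finset.mem_sdiff.1 this).1, (Finset.mem_sdiff.1 this).2⟩
  have hyK2 : y ∈ K2 ∧ y ∉ W := by
    have : y ∈ K2 \ W := hy ▸ Finset.mem_singleton_self y
    exact ⟨(Finset.mem_sdiff.1 this).1, (Finset.mem_sdiff.1 this).2⟩
  have hxK2 : x ∉ K2 := fun hc => hxK1.2 (Finset.mem_inter.2 ⟨hxK1.1, hc⟩)
  have hyK1 : y ∉ K1 := fun hc => hyK2.2 (Finset.mem_inter.2 ⟨hc, hyK2.1⟩)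
  have hxy : x ≠ y := fun hc => hxK2 (hc ▸ hyK2.1)
  -- every element of K1 other than x belongs to W, etc.
  have hK1W : ∀ p ∈ K1, p ≠ x → p ∈ W := by
    intro p hp hpx
    by_contra hc
    have : p ∈ K1 \ W := Finset.mem_sdiff.2 ⟨hp, hc⟩
    rw [hx] at this
    exact hpx (Finset.mem_singleton.1 this)
  have hK2W : ∀ p ∈ K2, p ≠ y → p ∈ W := by
    intro p hp hpy
    by_contra hc
    have : p ∈ K2 \ W := Finset.mem_sdiff.2 ⟨hp, hc⟩
    rw [hy] at this
    exact hpy (Finset.mem_singleton.1 this)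
  -- neighborhood of any w ∈ W is exactly W.erase w ∪ {x, y}
  have hNw : ∀ w ∈ W, G.neighborFinset w = (W.erase w) ∪ {x, y} := by
    intro w hw
    have hwx : w ≠ x := fun hc => hxK1.2 (hc ▸ hw)
    have hwy : w ≠ y := fun hc => hyK2.2 (hc ▸ hw)
    have hsub2 : (W.erase w) ∪ {x, y} ⊆ G.neighborFinset w := by
      intro p hp
      rw [SimpleGraph.mem_neighborFinset]
      rcases Finset.mem_union.1 hp with hp' | hp'
      · rw [Finset.mem_erase] at hp'
        exact hK1.2 w (hWK1 hw) p (hWK1 hp'.2) (Ne.symm hp'.1)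
      · rcases Finset.mem_insert.1 hp' with rfl | hp''
        · exact hK1.2 w (hWK1 hw) p hxK1.1 hwx
        · rw [Finset.mem_singleton] at hp''
          subst hp''
          exact hK2.2 w (hWK2 hw) p hyK2.1 hwy
    have hdisj : Disjoint (W.erase w) ({x, y} : Finset V) := by
      rw [Finset.disjoint_right]
      intro p hp hpW
      have hpW' : p ∈ W := Finset.mem_of_mem_erase hpW
      rcases Finset.mem_insert.1 hp with rfl | hp'
      · exact hxK1.2 hpW'
      · rw [Finset.mem_singleton] at hp'; subst hp'; exact hyK2.2 hpW'
    have hcard2 : ((W.erase w) ∪ {x, y}).card = Δ := by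
      rw [Finset.card_union_of_disjoint hdisj, Finset.card_erase_of_mem hw, hWcard,
        Finset.card_insert_of_notMem (by simpa using hxy), Finset.card_singleton]
      omega
    exact (Finset.eq_of_subset_of_card_le hsub2 (by rw [hcard2, hdeg w])).symm
  -- the remaining vertices Z
  set Z := ((W ∪ {x, y})ᶜ : Finset V) with hZ_def
  have hWxycard : (W ∪ {x, y}).card = Δ + 1 := by
    have hdisj : Disjoint W ({x, y} : Finset V) := by
      rw [Finset.disjoint_right]
      intro p hp hpW
      rcases Finset.mem_insert.1 hp with rfl | hp'
      · exact hxK1.2 hpW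
      · rw [Finset.mem_singleton] at hp'; subst hp'; exact hyK2.2 hpW
    rw [Finset.card_union_of_disjoint hdisj, hWcard,
      Finset.card_insert_of_notMem (by simpa using hxy), Finset.card_singleton]
    omega
  have hZcard : Z.card = Fintype.card V - (Δ + 1) := by
    rw [hZ_def, Finset.card_compl, hWxycard]
  -- each z ∈ Z has neighbors only in Z.erase z ∪ {x,y}
  have hNz : ∀ z ∈ Z, G.neighborFinset z ⊆ (Z.erase z) ∪ {x, y} := by
    intro z hz p hp
    have hzp : G.Adj z p := (SimpleGraph.mem_neighborFinset G z p).1 hp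
    have hzW : z ∉ W ∧ z ≠ x ∧ z ≠ y := by
      rw [hZ_def, Finset.mem_compl] at hz
      refine ⟨fun hc => hz (Finset.mem_union.2 (Or.inl hc)), ?_, ?_⟩
      · intro hc; exact hz (Finset.mem_union.2 (Or.inr (by simp [hc])))
      · intro hc; exact hz (Finset.mem_union.2 (Or.inr (by simp [hc])))
    have hpW : p ∉ W := by
      intro hc
      have := hNw p hc
      have hzmem : z ∈ G.neighborFinset p := (SimpleGraph.mem_neighborFinset G p z).2 hzp.symm
      rw [this] at hzmem
      rcases Finset.mem_union.1 hzmem with h' | h'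
      · exact hzW.1 (Finset.mem_of_mem_erase h')
      · rcases Finset.mem_insert.1 h' with rfl | h''
        · exact hzW.2.1 rfl
        · rw [Finset.mem_singleton] at h''; exact hzW.2.2 h''
    by_cases hpxy : p = x ∨ p = y
    · rcases hpxy with rfl | rfl
      · exact Finset.mem_union.2 (Or.inr (by simp))
      · exact Finset.mem_union.2 (Or.inr (by simp))
    · push_neg at hpxy
      have hpZ : p ∈ Z := by
        rw [hZ_def, Finset.mem_compl]
        intro hc
        rcases Finset.mem_union.1 hc with h' | h'
        · exact hpW h'
        · rcases Finset.mem_insert.1 h' with rfl | h''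
          · exact hpxy.1 rfl
          · rw [Finset.mem_singleton] at h''; exact hpxy.2 h''
      refine Finset.mem_union.2 (Or.inl (Finset.mem_erase.2 ⟨?_, hpZ⟩))
      intro hc; exact G.irrefl (hc ▸ hzp)
  -- x and y have at most one neighbor each in Z
  have hxZ : G.degIn Z x ≤ 1 := by
    have hWNx : W ⊆ G.neighborFinset x := by
      intro w hw
      rw [SimpleGraph.mem_neighborFinset]
      exact hK1.2 x hxK1.1 w (hWK1 hw) (fun hc => hxK1.2 (hc ▸ hw))
    have hsub3 : Z.filter (fun p => G.Adj x p) ⊆ (G.neighborFinset x) \ W := by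
      intro p hp
      rw [Finset.mem_filter] at hp
      refine Finset.mem_sdiff.2 ⟨(SimpleGraph.mem_neighborFinset G x p).2 hp.2, ?_⟩
      intro hc
      rw [hZ_def, Finset.mem_compl] at hp
      exact hp.1 (Finset.mem_union.2 (Or.inl hc))
    calc G.degIn Z x ≤ ((G.neighborFinset x) \ W).card := Finset.card_le_card hsub3
    _ = (G.neighborFinset x).card - W.card := Finset.card_sdiff_of_subset hWNx
    _ ≤ 1 := by rw [hdeg x, hWcard]; omega
  have hyZ : G.degIn Z y ≤ 1 := by
    have hWNy : W ⊆ G.neighborFinset y := by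
      intro w hw
      rw [SimpleGraph.mem_neighborFinset]
      exact hK2.2 y hyK2.1 w (hWK2 hw) (fun hc => hyK2.2 (hc ▸ hw))
    have hsub3 : Z.filter (fun p => G.Adj y p) ⊆ (G.neighborFinset y) \ W := by
      intro p hp
      rw [Finset.mem_filter] at hp
      refine Finset.mem_sdiff.2 ⟨(SimpleGraph.mem_neighborFinset G y p).2 hp.2, ?_⟩
      intro hc
      rw [hZ_def, Finset.mem_compl] at hp
      exact hp.1 (Finset.mem_union.2 (Or.inl hc))
    calc G.degIn Z y ≤ ((G.neighborFinset y) \ W).card := Finset.card_le_card hsub3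
    _ = (G.neighborFinset y).card - W.card := Finset.card_sdiff_of_subset hWNy
    _ ≤ 1 := by rw [hdeg y, hWcard]; omega
  -- main count
  have hcount : ∀ z ∈ Z, Δ ≤ (Z.card - 1) + G.degIn ({x, y} : Finset V) z := by
    intro z hz
    have hNsub := hNz z hz
    have : (G.neighborFinset z).card ≤ (Z.erase z).card + G.degIn ({x, y} : Finset V) z := by
      have hdecomp : G.neighborFinset z ⊆
          (Z.erase z) ∪ (({x, y} : Finset V).filter (fun p => G.Adj z p)) := by
        intro p hp
        rcases Finset.mem_union.1 (hNsub hp) with h' | h'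
        · exact Finset.mem_union.2 (Or.inl h')
        · exact Finset.mem_union.2 (Or.inr (Finset.mem_filter.2
            ⟨h', (SimpleGraph.mem_neighborFinset G z p).1 hp⟩))
      calc (G.neighborFinset z).card
          ≤ ((Z.erase z) ∪ (({x, y} : Finset V).filter (fun p => G.Adj z p))).card :=
            Finset.card_le_card hdecomp
      _ ≤ (Z.erase z).card + G.degIn ({x, y} : Finset V) z := Finset.card_union_le _ _
    rw [hdeg z, Finset.card_erase_of_mem hz] at this
    exact this
  have hzpos : Δ - 1 ≤ Z.card ∧ Z.card ≤ Δ := by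
    constructor <;> omega
  have hsum2 : ∑ z ∈ Z, G.degIn ({x, y} : Finset V) z ≤ 2 := by
    rw [G.sum_degIn_comm Z ({x, y} : Finset V), Finset.sum_pair hxy]
    omega
  have hsumZ : Z.card * Δ ≤ Z.card * (Z.card - 1) + 2 := by
    have hstep : ∀ z ∈ Z, (Δ : ℕ) ≤ (Z.card - 1) + G.degIn ({x, y} : Finset V) z := hcount
    have := Finset.sum_le_sum hstep
    rw [Finset.sum_const, smul_eq_mul, Finset.sum_add_distrib, Finset.sum_const,
      smul_eq_mul] at this
    have := le_trans this (by omega : Z.card * (Z.card - 1) + ∑ z ∈ Z, G.degIn ({x, y} : Finset V) z ≤ Z.card * (Z.card - 1) + 2)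
    omega
  -- contradiction
  have hZ1 : Δ - 1 ≤ Z.card := hzpos.1
  have hZ2 : Z.card ≤ Δ := hzpos.2
  have hc1 : (Z.card : ℤ) * Δ ≤ Z.card * (Z.card - 1) + 2 := by
    have : ((Z.card * (Z.card - 1) : ℕ) : ℤ) = (Z.card : ℤ) * (Z.card - 1) := by
      push_cast [Nat.cast_sub (by omega : 1 ≤ Z.card)]
      ring
    calc ((Z.card : ℤ)) * Δ = ((Z.card * Δ : ℕ) : ℤ) := by push_cast; ring
    _ ≤ ((Z.card * (Z.card - 1) + 2 : ℕ) : ℤ) := by exact_mod_cast hsumZ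
    _ = (Z.card : ℤ) * (Z.card - 1) + 2 := by rw [Nat.cast_add, this]; norm_num
  have hc2 : (Δ : ℤ) ≤ (Z.card : ℤ) + 1 := by exact_mod_cast (by omega : Δ ≤ Z.card + 1)
  have hc3 : (Z.card : ℤ) ≤ (Δ : ℤ) := by exact_mod_cast hZ2
  have hc4 : (3 : ℤ) ≤ (Δ : ℤ) := by exact_mod_cast hΔ
  nlinarith [hc1, hc2, hc3, hc4]

lemma pair_compl_not_alliance {Δ : ℕ} (hreg : G.IsRegularOfDegree Δ) {M D : Finset V}
    (hMcl : ∀ u ∈ M, ∀ v ∈ M, u ≠ v → G.Adj u v) (hM3 : 3 ≤ M.card)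
    (hD : D ⊆ M) (hD2 : D.card = 2) : ¬ G.IsExactAlliance Dᶜ ((Δ : ℤ) - 2) := by
  intro halli
  have F1 := G.alliance_degIn_compl_le_one hreg halli
  obtain ⟨u, v, huv, rfl⟩ := Finset.card_eq_two.1 hD2
  have hMD : 1 ≤ (M \ ({u, v} : Finset V)).card := by
    rw [Finset.card_sdiff_of_subset hD, hD2]; omega
  obtain ⟨w, hw⟩ := Finset.card_pos.1 hMD
  rw [Finset.mem_sdiff] at hw
  have hwu : w ≠ u := fun h => hw.2 (by simp [h])
  have hwv : w ≠ v := fun h => hw.2 (by simp [h])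
  have h2 := F1 w (Finset.mem_compl.2 hw.2)
  rw [compl_compl] at h2
  have hsub : ({u, v} : Finset V) ⊆ ({u, v} : Finset V).filter (fun p => G.Adj w p) := by
    intro p hp
    refine Finset.mem_filter.2 ⟨hp, ?_⟩
    rcases Finset.mem_insert.1 hp with rfl | hp'
    · exact hMcl w hw.1 p (hD (by simp)) hwu
    · rw [Finset.mem_singleton] at hp'
      subst hp'
      exact hMcl w hw.1 p (hD (by simp)) hwv
  have : 2 ≤ G.degIn ({u, v} : Finset V) w := by
    calc 2 = ({u, v} : Finset V).card := hD2.symm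
    _ ≤ _ := Finset.card_le_card hsub
  omega

lemma t2_adj {Δ : ℕ} (hreg : G.IsRegularOfDegree Δ) (hΔ : 3 ≤ Δ)
    (h2n : Fintype.card V ≤ 2 * Δ + 1) {S : Finset V}
    (h : G.IsExactAlliance S ((Δ : ℤ) - 2)) {u v : V} (hSc : Sᶜ = {u, v}) (huv : u ≠ v) :
    G.Adj u v := by
  by_contra hna
  have F1 := G.alliance_degIn_compl_le_one hreg h
  have hC : ∑ p ∈ Sᶜ, G.degIn S p ≤ S.card := by
    rw [← G.sum_degIn_comm]
    have := Finset.sum_le_card_nsmul S (fun p => G.degIn Sᶜ p) 1 F1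
    simpa [smul_eq_mul] using this
  have hdu : G.degIn Sᶜ u = 0 := by
    rw [hSc, degIn]
    rw [Finset.card_eq_zero]
    rw [Finset.filter_eq_empty_iff]
    intro p hp
    rcases Finset.mem_insert.1 hp with rfl | hp'
    · exact G.irrefl
    · rw [Finset.mem_singleton] at hp'; subst hp'; exact hna
  have hdv : G.degIn Sᶜ v = 0 := by
    rw [hSc, degIn]
    rw [Finset.card_eq_zero, Finset.filter_eq_empty_iff]
    intro p hp
    rcases Finset.mem_insert.1 hp with rfl | hp'
    · exact fun hc => hna hc.symm
    · rw [Finset.mem_singleton] at hp'; subst hp'; exact G.irrefl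
  have hu : G.degIn S u = Δ := by
    have := G.degIn_add_degIn_compl hreg S u
    omega
  have hv : G.degIn S v = Δ := by
    have := G.degIn_add_degIn_compl hreg S v
    omega
  have hsum : ∑ p ∈ Sᶜ, G.degIn S p = 2 * Δ := by
    rw [hSc, Finset.sum_pair huv, hu, hv]; ring
  have hcards : S.card + Sᶜ.card = Fintype.card V := Finset.card_add_card_compl S
  have hocited : Sᶜ.card = 2 := by
    rw [hSc]
    rw [Finset.card_insert_of_notMem (by simpa using huv), Finset.card_singleton]
  omega

lemma upper_bound {Δ : ℕ} (hreg : G.IsRegularOfDegree Δ) (hΔ : 3 ≤ Δ)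
    (h1 : 2 * Δ ≤ Fintype.card V) (h2 : Fintype.card V ≤ 2 * Δ + 1) :
    G.allianceCoeff ((Δ : ℤ) - 2) ≤ Fintype.card V + G.edgeFinset.card + 2 := by
  classical
  rw [allianceCoeff]
  have hset : {S : Finset V | G.IsExactAlliance S ((Δ : ℤ) - 2)}
      = (↑(Finset.univ.filter (fun S => G.IsExactAlliance S ((Δ : ℤ) - 2))) : Set (Finset V)) := by
    ext S; simp
  rw [hset, Set.ncard_coe_finset]
  set P := fun S : Finset V => G.IsExactAlliance S ((Δ : ℤ) - 2) with hP_def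
  set A := Finset.univ.filter P with hA_def
  set A1 := A.filter (fun S => Sᶜ.card = 1) with hA1_def
  set A2 := A.filter (fun S => Sᶜ.card = 2) with hA2_def
  set A3 := A.filter (fun S => 3 ≤ Sᶜ.card) with hA3_def
  have hmemP : ∀ S ∈ A, P S := fun S hS => (Finset.mem_filter.1 hS).2
  have hcover : A ⊆ A1 ∪ A2 ∪ A3 := by
    intro S hS
    have h1' : 1 ≤ Sᶜ.card := Finset.card_pos.2 (G.alliance_compl_nonempty hreg (hmemP S hS))
    rcases Nat.lt_or_ge Sᶜ.card 3 with hlt | hge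
    · have : Sᶜ.card = 1 ∨ Sᶜ.card = 2 := by omega
      rcases this with h' | h'
      · exact Finset.mem_union.2 (Or.inl (Finset.mem_union.2 (Or.inl
          (Finset.mem_filter.2 ⟨hS, h'⟩))))
      · exact Finset.mem_union.2 (Or.inl (Finset.mem_union.2 (Or.inr
          (Finset.mem_filter.2 ⟨hS, h'⟩))))
    · exact Finset.mem_union.2 (Or.inr (Finset.mem_filter.2 ⟨hS, hge⟩))
  have hcard_cover : A.card ≤ A1.card + A2.card + A3.card := by
    calc A.card ≤ (A1 ∪ A2 ∪ A3).card := Finset.card_le_card hcover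
    _ ≤ (A1 ∪ A2).card + A3.card := Finset.card_union_le _ _
    _ ≤ A1.card + A2.card + A3.card := by
        have := Finset.card_union_le A1 A2
        omega
  -- bound for A1
  have hA1_le : A1.card ≤ Fintype.card V := by
    have hsub : A1 ⊆ Finset.univ.image (fun w : V => ({w}ᶜ : Finset V)) := by
      intro S hS
      obtain ⟨w, hw⟩ := Finset.card_eq_one.1 (Finset.mem_filter.1 hS).2
      exact Finset.mem_image.2 ⟨w, Finset.mem_univ w, by rw [← hw, compl_compl]⟩
    calc A1.card ≤ _ := Finset.card_le_card hsub
    _ ≤ (Finset.univ : Finset V).card := Finset.card_image_le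
    _ = Fintype.card V := Finset.card_univ
  -- adjacent pairs
  set Pr := Finset.univ.filter
    (fun D : Finset V => ∃ u v : V, u ≠ v ∧ G.Adj u v ∧ D = {u, v}) with hPr_def
  set GoodP := Pr.filter (fun D => P Dᶜ) with hGoodP_def
  set BadP := Pr.filter (fun D => ¬ P Dᶜ) with hBadP_def
  have hPr_split : GoodP.card + BadP.card = Pr.card :=
    Finset.card_filter_add_card_filter_not _
  have hPr_le : Pr.card ≤ G.edgeFinset.card := by
    apply Finset.card_le_card_of_surjOn
      (fun e => Sym2.lift ⟨fun a b => ({a, b} : Finset V), fun a b => Finset.pair_comm a b⟩ e)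
    intro D hD
    rw [Finset.mem_coe, hPr_def, Finset.mem_filter] at hD
    obtain ⟨-, u, v, huv, hadj, rfl⟩ := hD
    refine ⟨s(u, v), ?_, ?_⟩
    · rw [Finset.mem_coe, SimpleGraph.mem_edgeFinset]
      exact hadj
    · simp
  -- bound for A2
  have hA2_le : A2.card ≤ GoodP.card := by
    have hsub : A2 ⊆ GoodP.image compl := by
      intro S hS
      rw [hA2_def, Finset.mem_filter] at hS
      obtain ⟨u, v, huv, hc⟩ := Finset.card_eq_two.1 hS.2
      have hadj : G.Adj u v := G.t2_adj hreg hΔ h2 (hmemP S hS.1) hc huv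
      refine Finset.mem_image.2 ⟨Sᶜ, ?_, by rw [compl_compl]⟩
      rw [hGoodP_def, Finset.mem_filter]
      refine ⟨?_, by rw [compl_compl]; exact hmemP S hS.1⟩
      rw [hPr_def, Finset.mem_filter]
      exact ⟨Finset.mem_univ _, u, v, huv, hadj, hc⟩
    calc A2.card ≤ _ := Finset.card_le_card hsub
    _ ≤ GoodP.card := Finset.card_image_le
  -- triangles and cliques
  set Tri := Finset.univ.filter (fun T => G.IsVTri T) with hTri_def
  set Clq := Finset.univ.filter (fun K => G.IsClqD Δ K) with hClq_def
  have hA3_le : A3.card ≤ Tri.card + (Clq.card + Clq.card) := by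
    have hsub : A3 ⊆ (Tri.image compl) ∪ (Clq ∪ Clq.image compl) := by
      intro S hS
      rw [hA3_def, Finset.mem_filter] at hS
      rcases G.alliance_classify hreg hΔ h1 h2 (hmemP S hS.1) hS.2 with hT | hK | hKc
      · refine Finset.mem_union.2 (Or.inl (Finset.mem_image.2 ⟨Sᶜ, ?_, by rw [compl_compl]⟩))
        rw [hTri_def, Finset.mem_filter]
        exact ⟨Finset.mem_univ _, hT⟩
      · refine Finset.mem_union.2 (Or.inr (Finset.mem_union.2 (Or.inl ?_)))
        rw [hClq_def, Finset.mem_filter]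
        exact ⟨Finset.mem_univ _, hK⟩
      · refine Finset.mem_union.2 (Or.inr (Finset.mem_union.2 (Or.inr
          (Finset.mem_image.2 ⟨Sᶜ, ?_, by rw [compl_compl]⟩))))
        rw [hClq_def, Finset.mem_filter]
        exact ⟨Finset.mem_univ _, hKc⟩
    calc A3.card ≤ _ := Finset.card_le_card hsub
    _ ≤ (Tri.image compl).card + (Clq ∪ Clq.image compl).card := Finset.card_union_le _ _
    _ ≤ Tri.card + (Clq.card + Clq.card) := by
        have e1 : (Tri.image compl).card ≤ Tri.card := Finset.card_image_le
        have e2 : (Clq ∪ Clq.image compl).card ≤ Clq.card + (Clq.image compl).card :=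
          Finset.card_union_le _ _
        have e3 : (Clq.image compl).card ≤ Clq.card := Finset.card_image_le
        omega
  -- facts about members of Tri ∪ Clq
  set F := Tri ∪ Clq with hF_def
  have hFclq : ∀ M ∈ F, (∀ u ∈ M, ∀ v ∈ M, u ≠ v → G.Adj u v) ∧ 3 ≤ M.card := by
    intro M hM
    rcases Finset.mem_union.1 hM with hM' | hM'
    · rw [hTri_def, Finset.mem_filter] at hM'
      exact ⟨hM'.2.2.1, le_of_eq hM'.2.1.symm⟩
    · rw [hClq_def, Finset.mem_filter] at hM'
      exact ⟨hM'.2.2, by rw [hM'.2.1]; exact hΔ⟩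
  -- all 2-subsets of members of F are bad pairs
  have hBadSub : F.biUnion (fun M => M.powersetCard 2) ⊆ BadP := by
    intro D hD
    obtain ⟨M, hM, hDM⟩ := Finset.mem_biUnion.1 hD
    rw [Finset.mem_powersetCard] at hDM
    obtain ⟨u, v, huv, hc⟩ := Finset.card_eq_two.1 hDM.2
    have hMcl := hFclq M hM
    rw [hBadP_def, Finset.mem_filter]
    constructor
    · rw [hPr_def, Finset.mem_filter]
      refine ⟨Finset.mem_univ _, u, v, huv, ?_, hc⟩
      exact hMcl.1 u (hDM.1 (hc ▸ (by simp : u ∈ ({u, v} : Finset V))))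
        v (hDM.1 (hc ▸ (by simp : v ∈ ({u, v} : Finset V)))) huv
    · exact G.pair_compl_not_alliance hreg hMcl.1 hMcl.2 hDM.1 hDM.2
  -- the 2-subsets of distinct members of F are disjoint
  have hdisjF : ∀ M ∈ F, ∀ M' ∈ F, M ≠ M' →
      Disjoint (M.powersetCard 2) (M'.powersetCard 2) := by
    intro M hM M' hM' hne
    rw [Finset.disjoint_left]
    intro D hD hD'
    rw [Finset.mem_powersetCard] at hD hD'
    obtain ⟨u, v, huv, hc⟩ := Finset.card_eq_two.1 hD.2
    have huM : u ∈ M := hD.1 (hc ▸ (by simp : u ∈ ({u, v} : Finset V)))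
    have hvM : v ∈ M := hD.1 (hc ▸ (by simp : v ∈ ({u, v} : Finset V)))
    have huM' : u ∈ M' := hD'.1 (hc ▸ (by simp : u ∈ ({u, v} : Finset V)))
    have hvM' : v ∈ M' := hD'.1 (hc ▸ (by simp : v ∈ ({u, v} : Finset V)))
    rcases Finset.mem_union.1 hM with hMt | hMk
    · rw [hTri_def, Finset.mem_filter] at hMt
      exact G.vtri_clique_no_shared_pair hMt.2 (hFclq M' hM').1
        (by rw [hMt.2.1]; exact (hFclq M' hM').2) (Ne.symm hne) huM hvM huM' hvM' huv
    · rcases Finset.mem_union.1 hM' with hMt' | hMk'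
      · rw [hTri_def, Finset.mem_filter] at hMt'
        exact G.vtri_clique_no_shared_pair hMt'.2 (hFclq M hM).1
          (by rw [hMt'.2.1]; exact (hFclq M hM).2) hne huM' hvM' huM hvM huv
      · rw [hClq_def, Finset.mem_filter] at hMk hMk'
        exact G.clq_no_shared_pair hreg hΔ h1 h2 hMk.2 hMk'.2 hne huM huM' hvM hvM' huv
  have hBad3F : 3 * F.card ≤ BadP.card := by
    have hcardBi : (F.biUnion (fun M => M.powersetCard 2)).card
        = ∑ M ∈ F, (M.powersetCard 2).card := Finset.card_biUnion hdisjF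
    have hterm : ∀ M ∈ F, 3 ≤ (M.powersetCard 2).card := by
      intro M hM
      rw [Finset.card_powersetCard]
      have h3 := (hFclq M hM).2
      calc 3 = Nat.choose 3 2 := by norm_num
      _ ≤ Nat.choose M.card 2 := Nat.choose_le_choose 2 h3
    calc 3 * F.card = ∑ _M ∈ F, 3 := by rw [Finset.sum_const, smul_eq_mul]; ring
    _ ≤ ∑ M ∈ F, (M.powersetCard 2).card := Finset.sum_le_sum hterm
    _ = (F.biUnion (fun M => M.powersetCard 2)).card := hcardBi.symm
    _ ≤ BadP.card := Finset.card_le_card hBadSub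
  have hTriF : Tri.card ≤ F.card := Finset.card_le_card Finset.subset_union_left
  have hClqF : Clq.card ≤ F.card := Finset.card_le_card Finset.subset_union_right
  omega

end SimpleGraph

/-- For a Δ-regular graph with `Δ ≥ 3`, `2Δ ≤ n ≤ 2Δ+1`, order `n` and size `m`:
`n ≤ A_{Δ-2}(G) ≤ n + m + 2`. -/
theorem allianceCoeff_maxDeg_sub_two_bounds
    {V : Type*} [Fintype V] [DecidableEq V]
    (G : SimpleGraph V) [DecidableRel G.Adj] (Δ : ℕ)
    (hreg : G.IsRegularOfDegree Δ) (hΔ : 3 ≤ Δ)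
    (h1 : 2 * Δ ≤ Fintype.card V) (h2 : Fintype.card V ≤ 2 * Δ + 1) :
    Fintype.card V ≤ G.allianceCoeff ((Δ : ℤ) - 2) ∧
    G.allianceCoeff ((Δ : ℤ) - 2) ≤ Fintype.card V + G.edgeFinset.card + 2 :=
  ⟨G.lower_bound hreg hΔ h1 h2, G.upper_bound hreg hΔ h1 h2⟩
end

section
/- Let G be a Δ-regular finite simple graph with 0 ≤ Δ ≤ 3, and let G* be any finite simple graph. If A(G*;x) = A(G;x) as polynomials, then G* is Δ-regular and has the same order, the same size, and the same number of connected components as G. -/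
open Polynomial Finset

set_option linter.unusedSectionVars false

namespace SimpleGraph
variable {V : Type*} [Fintype V] [DecidableEq V] {G : SimpleGraph V} [DecidableRel G.Adj]

lemma degIn_add_degOut (G : SimpleGraph V) [DecidableRel G.Adj] (S : Finset V) (v : V) :
    G.degIn S v + G.degOut S v = G.degree v := by
  rw [degIn, degOut, ← Finset.card_union_of_disjoint
    (Finset.disjoint_filter_filter disjoint_compl_right), ← Finset.filter_union,
    Finset.union_compl]
  rw [degree, neighborFinset_eq_filter]

lemma degIn_pos_of_conn {S : Finset V} (hconn : (G.induce (S : Set V)).Connected)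
    (h2 : 2 ≤ S.card) {v : V} (hv : v ∈ S) : 1 ≤ G.degIn S v := by
  obtain ⟨u, hu, hne⟩ := Finset.exists_mem_ne (lt_of_lt_of_le one_lt_two h2) v
  have hr : (G.induce (S : Set V)).Reachable ⟨v, by exact_mod_cast hv⟩ ⟨u, by exact_mod_cast hu⟩ :=
    hconn.preconnected _ _
  obtain ⟨p⟩ := hr
  cases p with
  | nil => exact absurd rfl hne
  | cons h q =>
    rename_i b
    have hadj : G.Adj v b.1 := h
    have hb : (b : V) ∈ S := by exact_mod_cast b.2
    exact Finset.card_pos.mpr ⟨b, Finset.mem_filter.mpr ⟨hb, hadj⟩⟩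

lemma isExactAlliance_singleton (G : SimpleGraph V) [DecidableRel G.Adj] (v : V) :
    G.IsExactAlliance {v} (-(G.degree v : ℤ)) := by
  have hdin : G.degIn {v} v = 0 := by simp [degIn, Finset.filter_singleton, G.irrefl]
  have hdout : G.degOut {v} v = G.degree v := by
    have := G.degIn_add_degOut {v} v; omega
  refine ⟨?_, ?_, ⟨v, Finset.mem_singleton_self v, by rw [hdin, hdout]; ring⟩⟩
  · rw [SimpleGraph.connected_iff]
    constructor
    · rintro ⟨a, ha⟩ ⟨b, hb⟩
      simp only [Finset.coe_singleton, Set.mem_singleton_iff] at ha hb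
      subst ha; subst hb; rfl
    · exact ⟨⟨v, by simp⟩⟩
  · intro u hu
    rw [Finset.mem_singleton] at hu; subst hu
    rw [hdin, hdout]
    simp

namespace IsExactAlliance
variable {S : Finset V} {k : ℤ}

lemma nonempty (h : G.IsExactAlliance S k) : S.Nonempty := by
  obtain ⟨v, hv, -⟩ := h.2.2; exact ⟨v, hv⟩

lemma singleton_or (h : G.IsExactAlliance S k) :
    (∃ v, S = {v} ∧ k = -(G.degree v : ℤ)) ∨
    (∃ v ∈ S, 1 ≤ G.degIn S v ∧ k = 2 * (G.degIn S v : ℤ) - G.degree v) := by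
  obtain ⟨v, hv, heq⟩ := h.2.2
  have hsum := G.degIn_add_degOut S v
  rcases Nat.lt_or_ge S.card 2 with h1 | h2
  · left
    have hcard : S.card = 1 := le_antisymm (by omega) (Finset.card_pos.mpr ⟨v, hv⟩)
    obtain ⟨a, ha⟩ := Finset.card_eq_one.mp hcard
    subst ha
    rw [Finset.mem_singleton] at hv; subst hv
    refine ⟨v, rfl, ?_⟩
    have hdin : G.degIn {v} v = 0 := by simp [degIn, Finset.filter_singleton, G.irrefl]
    rw [hdin] at heq hsum
    omega
  · right
    exact ⟨v, hv, degIn_pos_of_conn h.1 h2 hv, by omega⟩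

lemma le_degree_witness (h : G.IsExactAlliance S k) : ∃ v, k ≤ G.degree v ∧
    -(G.degree v : ℤ) ≤ k ∧ Even (k + G.degree v) := by
  obtain ⟨v, hv, heq⟩ := h.2.2
  have hsum := G.degIn_add_degOut S v
  refine ⟨v, by omega, by omega, ?_⟩
  have : k + (G.degree v : ℤ) = 2 * G.degIn S v := by omega
  exact ⟨G.degIn S v, by omega⟩

lemma le_maxDegree (h : G.IsExactAlliance S k) : k ≤ G.maxDegree := by
  obtain ⟨v, h1, -, -⟩ := h.le_degree_witness
  exact h1.trans (by exact_mod_cast G.degree_le_maxDegree v)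

lemma neg_maxDegree_le (h : G.IsExactAlliance S k) : -(G.maxDegree : ℤ) ≤ k := by
  obtain ⟨v, -, h2, -⟩ := h.le_degree_witness
  refine le_trans ?_ h2
  simp only [neg_le_neg_iff]
  exact_mod_cast G.degree_le_maxDegree v

end IsExactAlliance

lemma allianceCoeff_eq_zero {k : ℤ} (h : ∀ S, ¬ G.IsExactAlliance S k) :
    G.allianceCoeff k = 0 := by
  rw [allianceCoeff, Set.ncard_eq_zero (Set.toFinite _)]
  ext S; simp [h S]

lemma one_le_allianceCoeff {S : Finset V} {k : ℤ} (h : G.IsExactAlliance S k) :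
    1 ≤ G.allianceCoeff k :=
  (Set.ncard_pos (Set.toFinite _)).mpr ⟨S, h⟩

lemma allianceCoeff_eq_zero_of_gt {k : ℤ} (h : (G.maxDegree : ℤ) < k) : G.allianceCoeff k = 0 :=
  allianceCoeff_eq_zero fun _ hS => absurd hS.le_maxDegree (not_le.mpr h)

lemma allianceCoeff_eq_zero_of_lt {k : ℤ} (h : k < -(G.maxDegree : ℤ)) : G.allianceCoeff k = 0 :=
  allianceCoeff_eq_zero fun _ hS => absurd hS.neg_maxDegree_le (not_le.mpr h)

lemma allianceCoeff_eq_zero_of_odd {k : ℤ} (h : ∀ v : V, ¬ Even (k + G.degree v)) :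
    G.allianceCoeff k = 0 :=
  allianceCoeff_eq_zero fun _ hS => by
    obtain ⟨v, -, -, hev⟩ := hS.le_degree_witness; exact h v hev

lemma maxDegree_lt_card (G : SimpleGraph V) [DecidableRel G.Adj] [Nonempty V] :
    G.maxDegree < Fintype.card V := by
  obtain ⟨v, hv⟩ := G.exists_maximal_degree_vertex
  rw [hv]; exact G.degree_lt_card_verts v

lemma coeff_alliancePoly (G : SimpleGraph V) [DecidableRel G.Adj] [Nonempty V] (e : ℕ) :
    G.alliancePoly.coeff e = G.allianceCoeff ((e : ℤ) - Fintype.card V) := by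
  have hDn : G.maxDegree < Fintype.card V := G.maxDegree_lt_card
  rw [alliancePoly, finset_sum_coeff]
  have hterm : ∀ k ∈ Finset.Icc (-(G.maxDegree : ℤ)) (G.maxDegree : ℤ),
      ((G.allianceCoeff k : ℝ) • X ^ (((Fintype.card V : ℤ) + k).toNat)).coeff e
      = if k = (e : ℤ) - Fintype.card V then (G.allianceCoeff k : ℝ) else 0 := by
    intro k hk
    rw [Finset.mem_Icc] at hk
    rw [coeff_smul, coeff_X_pow]
    by_cases hke : k = (e : ℤ) - Fintype.card V
    · have ht : e = (((Fintype.card V : ℤ)) + k).toNat := by omega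
      simp [← ht, hke]
    · have ht : ¬ (e = (((Fintype.card V : ℤ)) + k).toNat) := by omega
      simp [ht, hke]
  rw [Finset.sum_congr rfl hterm, Finset.sum_ite_eq' (Finset.Icc _ _)
    ((e : ℤ) - Fintype.card V) (fun k => (G.allianceCoeff k : ℝ))]
  by_cases hmem : (e : ℤ) - Fintype.card V ∈ Finset.Icc (-(G.maxDegree : ℤ)) (G.maxDegree : ℤ)
  · simp [hmem]
  · rw [Finset.mem_Icc] at hmem
    push_neg at hmem
    rw [if_neg (by rw [Finset.mem_Icc]; push_neg; exact hmem)]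
    by_cases hx : -(G.maxDegree : ℤ) ≤ (e : ℤ) - Fintype.card V
    · rw [allianceCoeff_eq_zero_of_gt (hmem hx)]; simp
    · rw [allianceCoeff_eq_zero_of_lt (by omega)]; simp

lemma alliancePoly_of_isEmpty (G : SimpleGraph V) [DecidableRel G.Adj] [IsEmpty V] :
    G.alliancePoly = 0 := by
  rw [alliancePoly]
  refine Finset.sum_eq_zero fun k _ => ?_
  have : G.allianceCoeff k = 0 :=
    allianceCoeff_eq_zero fun S hS => by
      obtain ⟨v, -⟩ := hS.nonempty; exact IsEmpty.false v
  rw [this]; simp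

open scoped Classical in
noncomputable def compFinset (G : SimpleGraph V) (c : G.ConnectedComponent) : Finset V :=
  Finset.univ.filter (fun v => G.connectedComponentMk v = c)

lemma mem_compFinset {c : G.ConnectedComponent} {v : V} :
    v ∈ G.compFinset c ↔ G.connectedComponentMk v = c := by
  classical
  simp [compFinset]

lemma compFinset_closed {c : G.ConnectedComponent} :
    ∀ ⦃a b : V⦄, a ∈ G.compFinset c → G.Adj a b → b ∈ G.compFinset c := by
  intro a b ha hab
  rw [mem_compFinset] at ha ⊢
  rw [← ha]
  exact ConnectedComponent.sound hab.symm.reachable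

lemma Walk.end_mem_of_closed {S : Finset V} (hcl : ∀ ⦃a b : V⦄, a ∈ S → G.Adj a b → b ∈ S)
    {u v : V} (p : G.Walk u v) (hu : u ∈ S) : v ∈ S := by
  induction p with
  | nil => exact hu
  | cons h q ih => exact ih (hcl hu h)

lemma reachable_induce_of_closed {S : Finset V} (hcl : ∀ ⦃a b : V⦄, a ∈ S → G.Adj a b → b ∈ S)
    {u v : V} (p : G.Walk u v) (hu : u ∈ S) (hv : v ∈ S) :
    (G.induce (S : Set V)).Reachable ⟨u, by exact_mod_cast hu⟩ ⟨v, by exact_mod_cast hv⟩ := by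
  induction p with
  | nil => exact Reachable.refl _
  | @cons a b c h q ih =>
    have hb : b ∈ S := hcl hu h
    have step : (G.induce (S : Set V)).Adj ⟨a, by exact_mod_cast hu⟩ ⟨b, by exact_mod_cast hb⟩ := h
    exact step.reachable.trans (ih hb hv)

lemma degOut_eq_zero_of_closed {S : Finset V} (hcl : ∀ ⦃a b : V⦄, a ∈ S → G.Adj a b → b ∈ S)
    {v : V} (hv : v ∈ S) : G.degOut S v = 0 := by
  rw [degOut, Finset.card_eq_zero, Finset.filter_eq_empty_iff]
  intro u hu
  rw [Finset.mem_compl] at hu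
  exact fun hadj => hu (hcl hv hadj)

lemma induce_connected_of_closed {S : Finset V} (hne : S.Nonempty)
    (hcl : ∀ ⦃a b : V⦄, a ∈ S → G.Adj a b → b ∈ S)
    (hreach : ∀ ⦃a b : V⦄, a ∈ S → b ∈ S → G.Reachable a b) :
    (G.induce (S : Set V)).Connected := by
  rw [connected_iff]
  obtain ⟨v, hv⟩ := hne
  refine ⟨?_, ⟨⟨v, by exact_mod_cast hv⟩⟩⟩
  rintro ⟨a, ha⟩ ⟨b, hb⟩
  have ha' : a ∈ S := by exact_mod_cast ha
  have hb' : b ∈ S := by exact_mod_cast hb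
  obtain ⟨p⟩ := hreach ha' hb'
  exact reachable_induce_of_closed hcl p ha' hb'

lemma compFinset_alliance (c : G.ConnectedComponent) :
    ∃ k : ℤ, G.IsExactAlliance (G.compFinset c) k ∧
      (∃ v ∈ G.compFinset c, k = G.degree v) ∧ (∀ u ∈ G.compFinset c, k ≤ G.degree u) := by
  obtain ⟨w, hw⟩ := c.exists_rep
  have hwmem : w ∈ G.compFinset c := mem_compFinset.mpr hw
  have hne : (G.compFinset c).Nonempty := ⟨w, hwmem⟩
  have hval : ∀ u ∈ G.compFinset c,
      (G.degIn (G.compFinset c) u : ℤ) - G.degOut (G.compFinset c) u = G.degree u := by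
    intro u hu
    have h0 := degOut_eq_zero_of_closed compFinset_closed hu
    have hsum := G.degIn_add_degOut (G.compFinset c) u
    omega
  obtain ⟨v, hv, hmin⟩ := Finset.exists_min_image (G.compFinset c) (fun u => G.degree u) hne
  refine ⟨G.degree v, ⟨?_, ?_, ⟨v, hv, hval v hv⟩⟩, ⟨v, hv, rfl⟩, fun u hu => ?_⟩
  · refine induce_connected_of_closed hne compFinset_closed ?_
    intro a b ha hb
    rw [mem_compFinset] at ha hb
    exact ConnectedComponent.exact (ha.trans hb.symm)
  · intro u hu
    rw [hval u hu]
    exact_mod_cast hmin u hu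
  · exact_mod_cast hmin u hu

lemma allianceCoeff_neg_maxDegree (G : SimpleGraph V) [DecidableRel G.Adj] :
    G.allianceCoeff (-(G.maxDegree : ℤ)) =
      (Finset.univ.filter (fun v => G.degree v = G.maxDegree)).card := by
  classical
  have hset : {S : Finset V | G.IsExactAlliance S (-(G.maxDegree : ℤ))}
      = (fun v => ({v} : Finset V)) '' {v | G.degree v = G.maxDegree} := by
    ext S
    simp only [Set.mem_setOf_eq, Set.mem_image, Set.mem_setOf_eq]
    constructor
    · intro hS
      rcases hS.singleton_or with ⟨v, hv, hk⟩ | ⟨v, hv, h1, hk⟩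
      · refine ⟨v, ?_, hv.symm⟩
        have : (G.degree v : ℤ) = G.maxDegree := by omega
        exact_mod_cast this
      · exfalso
        have hle : G.degree v ≤ G.maxDegree := G.degree_le_maxDegree v
        have hsum := G.degIn_add_degOut S v
        omega
    · rintro ⟨v, hv, rfl⟩
      have h0 := G.isExactAlliance_singleton v
      rw [show (G.degree v : ℤ) = (G.maxDegree : ℤ) from by exact_mod_cast hv] at h0
      exact h0
  rw [allianceCoeff, hset, Set.ncard_image_of_injective _ Finset.singleton_injective,
    show {v | G.degree v = G.maxDegree}
      = ↑(Finset.univ.filter (fun v => G.degree v = G.maxDegree)) from by ext; simp,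
    Set.ncard_coe_finset]

lemma regular_maxDegree [Nonempty V] {D : ℕ} (hreg : G.IsRegularOfDegree D) :
    G.maxDegree = D := by
  obtain ⟨v, hv⟩ := G.exists_maximal_degree_vertex
  rw [hv, hreg v]

lemma allianceCoeff_degree_regular {D : ℕ} (hreg : G.IsRegularOfDegree D) :
    G.allianceCoeff (D : ℤ) = Nat.card G.ConnectedComponent := by
  classical
  have hset : {S : Finset V | G.IsExactAlliance S (D : ℤ)} = Set.range G.compFinset := by
    ext S
    simp only [Set.mem_setOf_eq, Set.mem_range]
    constructor
    · intro hS
      obtain ⟨v₀, hv₀⟩ := hS.nonempty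
      have hout : ∀ v ∈ S, G.degOut S v = 0 := by
        intro v hv
        have hb := hS.2.1 v hv
        have hsum := G.degIn_add_degOut S v
        rw [hreg v] at hsum
        omega
      have hcl : ∀ ⦃a b : V⦄, a ∈ S → G.Adj a b → b ∈ S := by
        intro a b ha hab
        by_contra hb
        have hmem : b ∈ Sᶜ.filter (fun u => G.Adj a u) :=
          Finset.mem_filter.mpr ⟨Finset.mem_compl.mpr hb, hab⟩
        have h0 := hout a ha
        rw [degOut, Finset.card_eq_zero] at h0
        rw [h0] at hmem
        exact absurd hmem (Finset.notMem_empty b)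
      refine ⟨G.connectedComponentMk v₀, ?_⟩
      ext u
      rw [mem_compFinset]
      constructor
      · intro hmk
        obtain ⟨p⟩ := ConnectedComponent.exact hmk
        exact Walk.end_mem_of_closed hcl p.reverse hv₀
      · intro hu
        have hr : (G.induce (S : Set V)).Reachable ⟨u, by exact_mod_cast hu⟩
            ⟨v₀, by exact_mod_cast hv₀⟩ := hS.1.preconnected _ _
        have hr' := hr.map (SimpleGraph.Embedding.induce (S : Set V)).toHom
        exact ConnectedComponent.sound hr'
    · rintro ⟨c, rfl⟩
      obtain ⟨k, hall, ⟨v, hv, hk⟩, -⟩ := compFinset_alliance c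
      rwa [hk, hreg v] at hall
  rw [allianceCoeff, hset, ← Set.image_univ,
    Set.ncard_image_of_injective _ ?_, Set.ncard_univ]
  intro c c' he
  obtain ⟨w, hw⟩ := c.exists_rep
  have hmem : w ∈ G.compFinset c := mem_compFinset.mpr hw
  rw [he, mem_compFinset] at hmem
  rw [← hw]; exact hmem

lemma twice_card_edges_regular {D : ℕ} (hreg : G.IsRegularOfDegree D) :
    2 * G.edgeFinset.card = Fintype.card V * D := by
  rw [← G.sum_degrees_eq_twice_card_edges]
  rw [Finset.sum_congr rfl (fun v _ => hreg v), Finset.sum_const, Finset.card_univ, smul_eq_mul]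

lemma exists_alliance_min {S : Finset V} (hne : S.Nonempty)
    (hconn : (G.induce (S : Set V)).Connected) :
    ∃ k : ℤ, G.IsExactAlliance S k ∧ (∃ v ∈ S, ((G.degIn S v : ℤ) - G.degOut S v) = k) ∧
      (∀ u ∈ S, k ≤ (G.degIn S u : ℤ) - G.degOut S u) := by
  obtain ⟨v, hv, hmin⟩ := Finset.exists_min_image S
    (fun u => (G.degIn S u : ℤ) - G.degOut S u) hne
  exact ⟨_, ⟨hconn, fun u hu => hmin u hu, ⟨v, hv, rfl⟩⟩, ⟨v, hv, rfl⟩, fun u hu => hmin u hu⟩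

lemma induce_compFinset_connected (G : SimpleGraph V) [DecidableRel G.Adj] (c : G.ConnectedComponent) :
    (G.induce ((G.compFinset c) : Set V)).Connected := by
  obtain ⟨w, hw⟩ := c.exists_rep
  have hwmem : w ∈ G.compFinset c := mem_compFinset.mpr hw
  refine induce_connected_of_closed ⟨w, hwmem⟩ compFinset_closed ?_
  intro a b ha hb
  rw [mem_compFinset] at ha hb
  exact ConnectedComponent.exact (ha.trans hb.symm)

lemma compFinset_injective (G : SimpleGraph V) [DecidableRel G.Adj] : Function.Injective G.compFinset := by
  intro c c' he
  obtain ⟨w, hw⟩ := c.exists_rep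
  have hmem : w ∈ G.compFinset c := mem_compFinset.mpr hw
  rw [he, mem_compFinset] at hmem
  rw [← hw]; exact hmem

lemma regular_card_bound {D : ℕ} (hreg : G.IsRegularOfDegree D) :
    (D + 1) * Nat.card G.ConnectedComponent ≤ Fintype.card V := by
  classical
  haveI : Fintype G.ConnectedComponent := Fintype.ofFinite _
  rw [Nat.card_eq_fintype_card]
  have hfib := Finset.card_eq_sum_card_fiberwise
    (f := G.connectedComponentMk) (s := Finset.univ) (t := Finset.univ)
    (fun x _ => Finset.mem_univ _)
  have hbound : ∀ c : G.ConnectedComponent,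
      D + 1 ≤ (Finset.univ.filter (fun v => G.connectedComponentMk v = c)).card := by
    intro c
    obtain ⟨v, hv⟩ := c.exists_rep
    have hsub : insert v (G.neighborFinset v)
        ⊆ Finset.univ.filter (fun u => G.connectedComponentMk u = c) := by
      intro u hu
      rw [Finset.mem_insert] at hu
      rw [Finset.mem_filter]
      refine ⟨Finset.mem_univ _, ?_⟩
      rcases hu with rfl | hu
      · exact hv
      · rw [SimpleGraph.mem_neighborFinset] at hu
        rw [← hv]
        exact ConnectedComponent.sound hu.symm.reachable
    have hcard : (insert v (G.neighborFinset v)).card = D + 1 := by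
      rw [Finset.card_insert_of_notMem (by simp), G.card_neighborFinset_eq_degree, hreg v]
    exact hcard ▸ Finset.card_le_card hsub
  calc (D + 1) * Fintype.card G.ConnectedComponent
      = ∑ _c : G.ConnectedComponent, (D + 1) := by
        rw [Finset.sum_const, Finset.card_univ, smul_eq_mul]; ring
    _ ≤ ∑ c : G.ConnectedComponent,
          (Finset.univ.filter (fun v => G.connectedComponentMk v = c)).card :=
        Finset.sum_le_sum (fun c _ => hbound c)
    _ = Fintype.card V := by rw [← hfib, Finset.card_univ]

end SimpleGraph


open SimpleGraph in
/-- The genuinely hard cases `(Δ, Δ*-Δ) ∈ {(2,1), (3,1), (3,2)}` of the main theorem. -/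
lemma hard_cases_false {V W : Type*} [Fintype V] [DecidableEq V] [Fintype W] [DecidableEq W]
    (G : SimpleGraph V) [DecidableRel G.Adj] (Gs : SimpleGraph W) [DecidableRel Gs.Adj]
    [Nonempty V] [Nonempty W] (Δ : ℕ) (hΔ : Δ ≤ 3) (hreg : G.IsRegularOfDegree Δ)
    (hladderZ : ∀ k : ℤ,
      Gs.allianceCoeff k = G.allianceCoeff (k + ((Gs.maxDegree : ℤ) - G.maxDegree)))
    (hlt : G.maxDegree < Gs.maxDegree)
    (halign : (Fintype.card W : ℤ) - Gs.maxDegree = (Fintype.card V : ℤ) - G.maxDegree)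
    (hbot : (Finset.univ.filter (fun v => Gs.degree v = Gs.maxDegree)).card = Fintype.card V)
    (hdd : 1 + ((Gs.maxDegree : ℤ) - G.maxDegree) ≤ G.maxDegree) : False := by
  classical
  have hDΔ : G.maxDegree = Δ := SimpleGraph.regular_maxDegree hreg
  have hD3 : G.maxDegree ≤ 3 := by rw [hDΔ]; exact hΔ
  have hn1 : 1 ≤ Fintype.card V := Fintype.card_pos
  have hN1 : 1 ≤ Fintype.card W := Fintype.card_pos
  -- all exact alliance values of `Gs` are at most `K = 2Δ - Δ*`
  have hkbound : ∀ (S : Finset W) (k : ℤ), Gs.IsExactAlliance S k →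
      k ≤ 2 * (G.maxDegree : ℤ) - Gs.maxDegree := by
    intro S k hS
    by_contra hcon
    push_neg at hcon
    have hl := hladderZ k
    rw [show G.allianceCoeff (k + ((Gs.maxDegree : ℤ) - G.maxDegree)) = 0 from
      SimpleGraph.allianceCoeff_eq_zero_of_gt (by omega)] at hl
    have := SimpleGraph.one_le_allianceCoeff hS
    omega
  -- parity: all degrees of `Gs` are congruent to `Δ*` mod 2
  have hpar : ∀ v : W, ((Gs.degree v : ℤ) + Gs.maxDegree) % 2 = 0 := by
    intro v
    have hl := hladderZ (-(Gs.degree v : ℤ))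
    have h1 := SimpleGraph.one_le_allianceCoeff (Gs.isExactAlliance_singleton v)
    by_contra hodd
    have hzero : G.allianceCoeff (-(Gs.degree v : ℤ) + ((Gs.maxDegree : ℤ) - G.maxDegree))
        = 0 := by
      apply SimpleGraph.allianceCoeff_eq_zero_of_odd
      intro u hev
      have hdu : (G.degree u : ℤ) = G.maxDegree := by rw [hreg u, hDΔ]
      rw [hdu] at hev
      obtain ⟨t, ht⟩ := hev
      omega
    omega
  -- the number of low-degree vertices
  have hLows : (Finset.univ.filter (fun v => ¬ (Gs.degree v = Gs.maxDegree))).card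
      + Fintype.card V = Fintype.card W := by
    have h0 := Finset.card_filter_add_card_filter_not
      (s := (Finset.univ : Finset W)) (p := fun v => Gs.degree v = Gs.maxDegree)
    rw [hbot, Finset.card_univ] at h0
    omega
  -- classification of the degrees in `Gs`
  have hclass : ∀ v : W, (Gs.degree v : ℤ) = Gs.maxDegree ∨
      (Gs.degree v : ℤ) = 2 * (G.maxDegree : ℤ) - Gs.maxDegree ∨
      (Gs.degree v : ℤ) = 2 * (G.maxDegree : ℤ) - Gs.maxDegree + 2 := by
    intro v
    have hle : Gs.degree v ≤ Gs.maxDegree := Gs.degree_le_maxDegree v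
    have hp := hpar v
    by_cases h0 : Gs.degree v = 0
    · exfalso
      -- `v` is a degree-0 vertex; forces `Δ* = Δ+1` even, i.e. the (3,1) case
      have hv0 : 1 ≤ (Finset.univ.filter (fun u => Gs.degree u = Gs.maxDegree)).card := by
        rw [hbot]; omega
      obtain ⟨v₀, hv₀⟩ := Finset.card_pos.mp hv0
      rw [Finset.mem_filter] at hv₀
      obtain ⟨k, hall, ⟨v₁, hv₁, hk⟩, -⟩ :=
        SimpleGraph.compFinset_alliance (G := Gs) (Gs.connectedComponentMk v₀)
      have hkb := hkbound _ _ hall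
      have hdeg1 : 1 ≤ Gs.degree v₁ := by
        rcases eq_or_ne v₁ v₀ with rfl | hne
        · rw [hv₀.2]; omega
        · obtain ⟨p⟩ := SimpleGraph.ConnectedComponent.exact (SimpleGraph.mem_compFinset.mp hv₁)
          cases p with
          | nil => exact absurd rfl hne
          | cons hadj q => exact (Gs.degree_pos_iff_exists_adj v₁).mpr ⟨_, hadj⟩
      have hv1low : ¬ (Gs.degree v₁ = Gs.maxDegree) := by
        intro hcc
        rw [hcc] at hk
        omega
      have hvlow : ¬ (Gs.degree v = Gs.maxDegree) := by omega
      -- there is exactly one low vertex here: `Δ* - Δ = 1` since `Δ*` must be even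
      have hcard1 : (Finset.univ.filter (fun u => ¬ (Gs.degree u = Gs.maxDegree))).card ≤ 1 := by
        have hNV : (Fintype.card W : ℤ) - Fintype.card V
            = (Gs.maxDegree : ℤ) - G.maxDegree := by omega
        -- Δ* even: parity of v gives Even Δ*
        omega
      have heq := Finset.card_le_one.mp hcard1 v₁
        (Finset.mem_filter.mpr ⟨Finset.mem_univ _, hv1low⟩) v
        (Finset.mem_filter.mpr ⟨Finset.mem_univ _, hvlow⟩)
      rw [heq] at hdeg1
      omega
    · omega
  -- minimum degree of `Gs` is at least 1
  have hmin1 : ∀ v : W, 1 ≤ Gs.degree v := by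
    intro v
    rcases hclass v with h | h | h <;> omega
  -- a choice of a neighbour for every vertex
  have hnbr : ∀ x : W, ∃ u, Gs.Adj x u := by
    intro x
    exact (Gs.degree_pos_iff_exists_adj x).mp (hmin1 x)
  choose nb hnb using hnbr
  -- the graph `Gs` with the vertex `x` cut off
  let Hg : W → SimpleGraph W := fun x =>
    { Adj := fun a b => Gs.Adj a b ∧ a ≠ x ∧ b ≠ x
      symm := ⟨fun a b h => ⟨h.1.symm, h.2.2, h.2.1⟩⟩
      loopless := ⟨fun a h => Gs.loopless.irrefl a h.1⟩ }
  haveI hdec : ∀ x, DecidableRel (Hg x).Adj := fun x a b =>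
    (by exact inferInstanceAs (Decidable (Gs.Adj a b ∧ a ≠ x ∧ b ≠ x)))
  -- the piece of `x`: the component of `nb x` after deleting `x`
  let pc : W → Finset W := fun x => (Hg x).compFinset ((Hg x).connectedComponentMk (nb x))
  have hnb_in : ∀ x : W, nb x ∈ pc x := fun x => SimpleGraph.mem_compFinset.mpr rfl
  have hx_notin : ∀ x : W, x ∉ pc x := by
    intro x hxin
    rw [SimpleGraph.mem_compFinset] at hxin
    obtain ⟨p⟩ := SimpleGraph.ConnectedComponent.exact hxin
    have key : ∀ (y : W) (q : (Hg x).Walk x y), x = y := by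
      intro y q
      cases q with
      | nil => rfl
      | cons hadj q' => exact absurd rfl hadj.2.1
    exact (hnb x).ne (key _ p)
  have hout : ∀ x : W, ∀ u ∈ pc x, ∀ v, Gs.Adj u v → v ∉ pc x → v = x := by
    intro x u hu v hadj hv
    by_contra hne
    have hne' : u ≠ x := fun h => (hx_notin x) (h ▸ hu)
    have hHadj : (Hg x).Adj u v := ⟨hadj, hne', hne⟩
    exact hv (SimpleGraph.compFinset_closed hu hHadj)
  have hdegOut_le : ∀ x : W, ∀ u ∈ pc x, Gs.degOut (pc x) u ≤ 1 := by
    intro x u hu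
    rw [SimpleGraph.degOut]
    refine le_trans (Finset.card_le_card ?_) (Finset.card_singleton x).le
    intro v hvf
    rw [Finset.mem_filter, Finset.mem_compl] at hvf
    rw [Finset.mem_singleton]
    exact hout x u hu v hvf.2 hvf.1
  have hdegOut_zero : ∀ x : W, ∀ u ∈ pc x, ¬ Gs.Adj u x → Gs.degOut (pc x) u = 0 := by
    intro x u hu hnadj
    rw [SimpleGraph.degOut, Finset.card_eq_zero, Finset.filter_eq_empty_iff]
    intro v hv hadj
    rw [Finset.mem_compl] at hv
    exact hnadj ((hout x u hu v hadj hv) ▸ hadj)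
  have hconnP : ∀ x : W, (Gs.induce ((pc x) : Set W)).Connected := by
    intro x
    have h1 := SimpleGraph.induce_compFinset_connected (Hg x)
      ((Hg x).connectedComponentMk (nb x))
    exact h1.mono (by intro a b hab; exact hab.1)
  -- the excluded set: neighbourhoods of degree-K vertices
  let Excl : Finset W := (Finset.univ.filter
      (fun ℓ => (Gs.degree ℓ : ℤ) = 2 * (G.maxDegree : ℤ) - Gs.maxDegree)).biUnion
      (fun ℓ => Gs.neighborFinset ℓ)
  -- pieces of non-excluded vertices are exact K-alliances
  have hallP : ∀ x : W, x ∉ Excl →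
      Gs.IsExactAlliance (pc x) (2 * (G.maxDegree : ℤ) - Gs.maxDegree) := by
    intro x hx
    obtain ⟨k, hall, ⟨v1, hv1, hk1⟩, hminP⟩ :=
      SimpleGraph.exists_alliance_min (G := Gs) ⟨nb x, hnb_in x⟩ (hconnP x)
    have hkb := hkbound _ _ hall
    have hlowb : ∀ u ∈ pc x, (2 * (G.maxDegree : ℤ) - Gs.maxDegree)
        ≤ (Gs.degIn (pc x) u : ℤ) - Gs.degOut (pc x) u := by
      intro u hu
      have hsum := Gs.degIn_add_degOut (pc x) u
      have hle1 := hdegOut_le x u hu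
      rcases hclass u with hcls | hcls | hcls
      · omega
      · have h0 : Gs.degOut (pc x) u = 0 := by
          apply hdegOut_zero x u hu
          intro hadj
          apply hx
          rw [Finset.mem_biUnion]
          exact ⟨u, Finset.mem_filter.mpr ⟨Finset.mem_univ _, hcls⟩,
            (Gs.mem_neighborFinset u x).mpr hadj⟩
        omega
      · omega
    have hkK : k = 2 * (G.maxDegree : ℤ) - Gs.maxDegree := by
      have := hlowb v1 hv1
      omega
    rwa [← hkK]
  -- components of `Gs` are exact K-alliances
  have hallC : ∀ c : Gs.ConnectedComponent,
      Gs.IsExactAlliance (Gs.compFinset c) (2 * (G.maxDegree : ℤ) - Gs.maxDegree) := by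
    intro c
    obtain ⟨k, hall, ⟨v1, hv1, hk1⟩, -⟩ := SimpleGraph.compFinset_alliance (G := Gs) c
    have hkb := hkbound _ _ hall
    rcases hclass v1 with hcls | hcls | hcls
    · exfalso; omega
    · have hkK : k = 2 * (G.maxDegree : ℤ) - Gs.maxDegree := by omega
      rwa [← hkK]
    · exfalso; omega
  -- counting
  haveI : Fintype Gs.ConnectedComponent := Fintype.ofFinite _
  haveI : Nonempty Gs.ConnectedComponent :=
    ⟨Gs.connectedComponentMk (Classical.arbitrary W)⟩
  haveI : Nonempty G.ConnectedComponent :=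
    ⟨G.connectedComponentMk (Classical.arbitrary V)⟩
  have hFKfin : {S : Finset W |
      Gs.IsExactAlliance S (2 * (G.maxDegree : ℤ) - Gs.maxDegree)}.Finite := Set.toFinite _
  have hAsub : (Finset.univ \ Excl).image pc ⊆ hFKfin.toFinset := by
    intro S hS
    rw [Finset.mem_image] at hS
    obtain ⟨x, hx, rfl⟩ := hS
    rw [Finset.mem_sdiff] at hx
    rw [Set.Finite.mem_toFinset]
    exact hallP x hx.2
  have hBsub : Finset.univ.image Gs.compFinset ⊆ hFKfin.toFinset := by
    intro S hS
    rw [Finset.mem_image] at hS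
    obtain ⟨c, -, rfl⟩ := hS
    rw [Set.Finite.mem_toFinset]
    exact hallC c
  have hdisjAB : Disjoint ((Finset.univ \ Excl).image pc) (Finset.univ.image Gs.compFinset) := by
    rw [Finset.disjoint_left]
    intro S hSA hSB
    rw [Finset.mem_image] at hSA hSB
    obtain ⟨x, -, rfl⟩ := hSA
    obtain ⟨c, -, hc⟩ := hSB
    have h1 : nb x ∈ Gs.compFinset c := by rw [hc]; exact hnb_in x
    have h2 : x ∈ Gs.compFinset c := SimpleGraph.compFinset_closed h1 (hnb x).symm
    rw [hc] at h2
    exact hx_notin x h2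
  have hcardA : ((Finset.univ \ Excl).image pc).card = (Finset.univ \ Excl).card := by
    apply Finset.card_image_of_injOn
    intro x hx y hy he
    by_contra hne
    have h1 : nb x ∈ pc y := he ▸ hnb_in x
    have h2 := hout y (nb x) h1 x (hnb x).symm (he ▸ hx_notin x)
    exact hne h2
  have hcardB : (Finset.univ.image Gs.compFinset).card = Fintype.card Gs.ConnectedComponent := by
    rw [Finset.card_image_of_injective _ (SimpleGraph.compFinset_injective Gs),
      Finset.card_univ]
  have hFKcard : hFKfin.toFinset.card = Nat.card G.ConnectedComponent := by
    have h1 : Gs.allianceCoeff (2 * (G.maxDegree : ℤ) - Gs.maxDegree)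
        = Nat.card G.ConnectedComponent := by
      have hl := hladderZ (2 * (G.maxDegree : ℤ) - Gs.maxDegree)
      rw [show (2 * (G.maxDegree : ℤ) - Gs.maxDegree) + ((Gs.maxDegree : ℤ) - G.maxDegree)
        = ((Δ : ℕ) : ℤ) from by rw [← hDΔ]; ring] at hl
      rw [SimpleGraph.allianceCoeff_degree_regular hreg] at hl
      exact hl
    rw [← h1, SimpleGraph.allianceCoeff, Set.ncard_eq_toFinset_card _ hFKfin]
  have hunion : ((Finset.univ \ Excl).image pc).card + (Finset.univ.image Gs.compFinset).card
      ≤ hFKfin.toFinset.card := by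
    rw [← Finset.card_union_of_disjoint hdisjAB]
    exact Finset.card_le_card (Finset.union_subset hAsub hBsub)
  -- bound on the excluded set
  have hExcl : Excl.card ≤ 2 := by
    refine le_trans Finset.card_biUnion_le ?_
    have hsub : (Finset.univ.filter
        (fun ℓ => (Gs.degree ℓ : ℤ) = 2 * (G.maxDegree : ℤ) - Gs.maxDegree))
        ⊆ Finset.univ.filter (fun v => ¬ (Gs.degree v = Gs.maxDegree)) := by
      intro ℓ hℓ
      rw [Finset.mem_filter] at hℓ ⊢
      refine ⟨Finset.mem_univ _, fun hcc => ?_⟩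
      rw [hcc] at hℓ
      omega
    have hc1 : (Finset.univ.filter
        (fun ℓ => (Gs.degree ℓ : ℤ) = 2 * (G.maxDegree : ℤ) - Gs.maxDegree)).card
        ≤ (Finset.univ.filter (fun v => ¬ (Gs.degree v = Gs.maxDegree))).card :=
      Finset.card_le_card hsub
    have hterm : ∀ ℓ ∈ (Finset.univ.filter
        (fun ℓ => (Gs.degree ℓ : ℤ) = 2 * (G.maxDegree : ℤ) - Gs.maxDegree)),
        (Gs.neighborFinset ℓ).card = Gs.degree ℓ := fun ℓ _ =>
      Gs.card_neighborFinset_eq_degree ℓ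
    rw [Finset.sum_congr rfl hterm]
    -- each degree in the sum equals `K ≤ 2`, and there are at most `Δ* - Δ ≤ 2` summands,
    -- with `K = 1` whenever there are two
    have hKle : 2 * (G.maxDegree : ℤ) - Gs.maxDegree ≤ 2 := by omega
    have hLc : (Finset.univ.filter (fun v => ¬ (Gs.degree v = Gs.maxDegree))).card
        + Fintype.card V = Fintype.card W := hLows
    have hNle : (Fintype.card W : ℤ) ≤ Fintype.card V + 2 := by omega
    rcases le_or_gt (Finset.univ.filter
        (fun ℓ => (Gs.degree ℓ : ℤ) = 2 * (G.maxDegree : ℤ) - Gs.maxDegree)).card 1 with hs1 | hs2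
    · -- at most one summand, each at most 2
      refine le_trans (Finset.sum_le_card_nsmul _ _ 2 (fun ℓ hℓ => ?_)) (by
        simp only [smul_eq_mul]; omega)
      rw [Finset.mem_filter] at hℓ
      omega
    · -- at least two low vertices, so `Δ* - Δ = 2` and `K = 1`
      have h2 : 2 ≤ (Finset.univ.filter (fun v => ¬ (Gs.degree v = Gs.maxDegree))).card := by
        omega
      have hK1 : 2 * (G.maxDegree : ℤ) - Gs.maxDegree = 1 := by omega
      refine le_trans (Finset.sum_le_card_nsmul _ _ 1 (fun ℓ hℓ => ?_)) (by
        simp only [smul_eq_mul]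
        have : (Finset.univ.filter
          (fun ℓ => (Gs.degree ℓ : ℤ) = 2 * (G.maxDegree : ℤ) - Gs.maxDegree)).card ≤ 2 := by
          omega
        omega)
      rw [Finset.mem_filter] at hℓ
      omega
  -- final count
  have hAc : (Finset.univ \ Excl).card = Fintype.card W - Excl.card :=
    (Finset.card_sdiff_of_subset (Finset.subset_univ _)).trans (by rw [Finset.card_univ])
  have hBc : 1 ≤ Fintype.card Gs.ConnectedComponent := Fintype.card_pos
  have hGc : 1 ≤ Nat.card G.ConnectedComponent := Nat.card_pos
  have hsize := SimpleGraph.regular_card_bound hreg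
  have h3 : 3 * Nat.card G.ConnectedComponent ≤ (Δ + 1) * Nat.card G.ConnectedComponent := by
    have hΔ2 : 2 ≤ Δ := by omega
    exact Nat.mul_le_mul_right _ (by omega)
  have hWV : (Fintype.card W : ℤ) ≥ Fintype.card V + 1 := by omega
  rw [hcardA, hcardB, hFKcard] at hunion
  omega


/-- If `G` is Δ-regular with `0 ≤ Δ ≤ 3` and `G*` has the same alliance
polynomial, then `G*` is Δ-regular with the same order, size and number of connected
components as `G`. -/
theorem alliancePoly_determines_regular_small_degree
    {V W : Type*} [Fintype V] [DecidableEq V] [Fintype W] [DecidableEq W]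
    (G : SimpleGraph V) [DecidableRel G.Adj] (Δ : ℕ) (hΔ : Δ ≤ 3)
    (hreg : G.IsRegularOfDegree Δ)
    (Gs : SimpleGraph W) [DecidableRel Gs.Adj]
    (h : Gs.alliancePoly = G.alliancePoly) :
    Gs.IsRegularOfDegree Δ ∧
    Fintype.card W = Fintype.card V ∧
    Gs.edgeFinset.card = G.edgeFinset.card ∧
    Nat.card Gs.ConnectedComponent = Nat.card G.ConnectedComponent := by
  classical
  rcases isEmpty_or_nonempty V with hVe | hV
  · -- `V` is empty, hence both graphs are empty.
    have hGpoly : G.alliancePoly = 0 := G.alliancePoly_of_isEmpty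
    rw [hGpoly] at h
    have hWe : IsEmpty W := by
      by_contra hne
      rw [not_isEmpty_iff] at hne
      obtain ⟨v, hv⟩ := Gs.exists_maximal_degree_vertex
      have h1 : Gs.IsExactAlliance {v} (-(Gs.maxDegree : ℤ)) := by
        have h0 := Gs.isExactAlliance_singleton v
        rw [show ((Gs.degree v : ℤ)) = (Gs.maxDegree : ℤ) from by exact_mod_cast hv.symm] at h0
        exact h0
      have hpos := SimpleGraph.one_le_allianceCoeff h1
      have hcoeff := Gs.coeff_alliancePoly (Fintype.card W - Gs.maxDegree)
      have hDlt := Gs.maxDegree_lt_card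
      rw [show ((↑(Fintype.card W - Gs.maxDegree) : ℤ) - Fintype.card W) = -(Gs.maxDegree : ℤ)
        from by push_cast [Nat.cast_sub hDlt.le]; ring] at hcoeff
      rw [h] at hcoeff
      simp only [Polynomial.coeff_zero] at hcoeff
      have : Gs.allianceCoeff (-(Gs.maxDegree : ℤ)) = 0 := by exact_mod_cast hcoeff.symm
      omega
    haveI := hVe; haveI := hWe
    have hccV : IsEmpty G.ConnectedComponent :=
      ⟨fun c => SimpleGraph.ConnectedComponent.ind (fun v => isEmptyElim v) c⟩
    have hccW : IsEmpty Gs.ConnectedComponent :=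
      ⟨fun c => SimpleGraph.ConnectedComponent.ind (fun v => isEmptyElim v) c⟩
    have heV : 2 * G.edgeFinset.card = 0 := by
      rw [← G.sum_degrees_eq_twice_card_edges, Finset.univ_eq_empty, Finset.sum_empty]
    have heW : 2 * Gs.edgeFinset.card = 0 := by
      rw [← Gs.sum_degrees_eq_twice_card_edges, Finset.univ_eq_empty, Finset.sum_empty]
    refine ⟨fun v => isEmptyElim v, ?_, by omega, ?_⟩
    · rw [Fintype.card_eq_zero, Fintype.card_eq_zero]
    · rw [Nat.card_of_isEmpty, Nat.card_of_isEmpty]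
  · -- `V` is nonempty.
    haveI := hV
    have hDΔ : G.maxDegree = Δ := SimpleGraph.regular_maxDegree hreg
    have hWne : Nonempty W := by
      by_contra hne
      rw [not_nonempty_iff] at hne
      haveI := hne
      have hGspoly : Gs.alliancePoly = 0 := Gs.alliancePoly_of_isEmpty
      rw [hGspoly] at h
      obtain ⟨v, hv⟩ := G.exists_maximal_degree_vertex
      have h1 : G.IsExactAlliance {v} (-(G.maxDegree : ℤ)) := by
        have h0 := G.isExactAlliance_singleton v
        rw [show ((G.degree v : ℤ)) = (G.maxDegree : ℤ) from by exact_mod_cast hv.symm] at h0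
        exact h0
      have hpos := SimpleGraph.one_le_allianceCoeff h1
      have hcoeff := G.coeff_alliancePoly (Fintype.card V - G.maxDegree)
      have hDlt := G.maxDegree_lt_card
      rw [show ((↑(Fintype.card V - G.maxDegree) : ℤ) - Fintype.card V) = -(G.maxDegree : ℤ)
        from by push_cast [Nat.cast_sub hDlt.le]; ring] at hcoeff
      rw [← h] at hcoeff
      simp only [Polynomial.coeff_zero] at hcoeff
      have : G.allianceCoeff (-(G.maxDegree : ℤ)) = 0 := by exact_mod_cast hcoeff.symm
      omega
    haveI := hWne
    have hcV := G.maxDegree_lt_card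
    have hcW := Gs.maxDegree_lt_card
    -- the coefficient ladder
    have hladderE : ∀ e : ℕ, Gs.allianceCoeff ((e : ℤ) - Fintype.card W)
        = G.allianceCoeff ((e : ℤ) - Fintype.card V) := by
      intro e
      have hc := congrArg (fun p : Polynomial ℝ => p.coeff e) h
      rw [Gs.coeff_alliancePoly e, G.coeff_alliancePoly e] at hc
      exact_mod_cast hc
    -- nonvanishing of the two bottom coefficients
    have hG1 : 1 ≤ G.allianceCoeff (-(G.maxDegree : ℤ)) := by
      obtain ⟨v, hv⟩ := G.exists_maximal_degree_vertex
      refine SimpleGraph.one_le_allianceCoeff (S := {v}) ?_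
      have h0 := G.isExactAlliance_singleton v
      rwa [show ((G.degree v : ℤ)) = (G.maxDegree : ℤ) from by exact_mod_cast hv.symm] at h0
    have hGs1 : 1 ≤ Gs.allianceCoeff (-(Gs.maxDegree : ℤ)) := by
      obtain ⟨v, hv⟩ := Gs.exists_maximal_degree_vertex
      refine SimpleGraph.one_le_allianceCoeff (S := {v}) ?_
      have h0 := Gs.isExactAlliance_singleton v
      rwa [show ((Gs.degree v : ℤ)) = (Gs.maxDegree : ℤ) from by exact_mod_cast hv.symm] at h0
    -- alignment of the minimal exponents
    have halign : (Fintype.card W : ℤ) - Gs.maxDegree = (Fintype.card V : ℤ) - G.maxDegree := by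
      have d1 := hladderE (Fintype.card W - Gs.maxDegree)
      rw [show ((↑(Fintype.card W - Gs.maxDegree) : ℤ) - Fintype.card W) = -(Gs.maxDegree : ℤ)
        from by push_cast [Nat.cast_sub hcW.le]; ring] at d1
      have g1 : -(G.maxDegree : ℤ) ≤ (↑(Fintype.card W - Gs.maxDegree) : ℤ) - Fintype.card V := by
        by_contra hcon
        push_neg at hcon
        rw [SimpleGraph.allianceCoeff_eq_zero_of_lt hcon] at d1
        omega
      have d2 := hladderE (Fintype.card V - G.maxDegree)
      rw [show ((↑(Fintype.card V - G.maxDegree) : ℤ) - Fintype.card V) = -(G.maxDegree : ℤ)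
        from by push_cast [Nat.cast_sub hcV.le]; ring] at d2
      have g2 : -(Gs.maxDegree : ℤ) ≤ (↑(Fintype.card V - G.maxDegree) : ℤ) - Fintype.card W := by
        by_contra hcon
        push_neg at hcon
        rw [SimpleGraph.allianceCoeff_eq_zero_of_lt hcon] at d2
        omega
      have e1 : ((↑(Fintype.card W - Gs.maxDegree) : ℤ)) = Fintype.card W - Gs.maxDegree := by
        push_cast [Nat.cast_sub hcW.le]; ring
      have e2 : ((↑(Fintype.card V - G.maxDegree) : ℤ)) = Fintype.card V - G.maxDegree := by
        push_cast [Nat.cast_sub hcV.le]; ring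
      rw [e1] at g1
      rw [e2] at g2
      omega
    -- the ladder over all integers
    have hladderZ : ∀ k : ℤ,
        Gs.allianceCoeff k = G.allianceCoeff (k + ((Gs.maxDegree : ℤ) - G.maxDegree)) := by
      intro k
      have hmn : (Fintype.card W : ℤ) - Fintype.card V = (Gs.maxDegree : ℤ) - G.maxDegree := by
        omega
      by_cases hk : -(Fintype.card W : ℤ) ≤ k
      · have hnn : (0 : ℤ) ≤ (Fintype.card W : ℤ) + k := by omega
        have heq : (((((Fintype.card W : ℤ) + k).toNat) : ℤ)) = (Fintype.card W : ℤ) + k :=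
          Int.toNat_of_nonneg hnn
        have hl := hladderE (((Fintype.card W : ℤ) + k).toNat)
        rw [show ((((((Fintype.card W : ℤ) + k).toNat) : ℤ)) - Fintype.card W) = k from by omega]
          at hl
        rw [show ((((((Fintype.card W : ℤ) + k).toNat) : ℤ)) - Fintype.card V)
          = k + ((Gs.maxDegree : ℤ) - G.maxDegree) from by omega] at hl
        exact hl
      · push_neg at hk
        rw [SimpleGraph.allianceCoeff_eq_zero_of_lt (show k < -(Gs.maxDegree : ℤ) by omega),
          SimpleGraph.allianceCoeff_eq_zero_of_lt
            (show k + ((Gs.maxDegree : ℤ) - G.maxDegree) < -(G.maxDegree : ℤ) by omega)]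
    -- the bottom coefficient: number of maximum-degree vertices of `Gs` equals `card V`
    have hbot : (Finset.univ.filter (fun v => Gs.degree v = Gs.maxDegree)).card
        = Fintype.card V := by
      have hl := hladderZ (-(Gs.maxDegree : ℤ))
      rw [show (-(Gs.maxDegree : ℤ) + ((Gs.maxDegree : ℤ) - G.maxDegree)) = -(G.maxDegree : ℤ)
        from by ring] at hl
      rw [Gs.allianceCoeff_neg_maxDegree, G.allianceCoeff_neg_maxDegree] at hl
      rw [hl]
      rw [show (Finset.univ.filter (fun v => G.degree v = G.maxDegree)) = Finset.univ from
        Finset.filter_eq_self.mpr (fun v _ => by rw [hreg v, hDΔ])]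
      exact Finset.card_univ
    -- `maxDegree G ≤ maxDegree Gs`
    have hDle : G.maxDegree ≤ Gs.maxDegree := by
      by_contra hcon
      push_neg at hcon
      have hfc : (Finset.univ.filter (fun v => Gs.degree v = Gs.maxDegree)).card
          ≤ Fintype.card W := by
        refine le_trans (Finset.card_filter_le _ _) ?_
        rw [Finset.card_univ]
      omega
    rcases eq_or_lt_of_le hDle with hDeq | hDlt
    · -- main case: same maximum degree, conclusions follow
      have hmn : Fintype.card W = Fintype.card V := by omega
      have hregs : Gs.IsRegularOfDegree Δ := by
        have hfilter : (Finset.univ.filter (fun v => Gs.degree v = Gs.maxDegree))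
            = Finset.univ := by
          apply Finset.eq_univ_of_card
          rw [hbot, ← hmn]
        intro v
        have hv : v ∈ Finset.univ.filter (fun v => Gs.degree v = Gs.maxDegree) := by
          rw [hfilter]; exact Finset.mem_univ v
        rw [Finset.mem_filter] at hv
        rw [hv.2, ← hDeq, hDΔ]
      refine ⟨hregs, hmn, ?_, ?_⟩
      · have e1 := SimpleGraph.twice_card_edges_regular hregs
        have e2 := SimpleGraph.twice_card_edges_regular hreg
        rw [hmn] at e1
        omega
      · have c1 := SimpleGraph.allianceCoeff_degree_regular hregs
        have c2 := SimpleGraph.allianceCoeff_degree_regular hreg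
        have hl := hladderZ (Δ : ℤ)
        rw [show ((Δ : ℤ) + ((Gs.maxDegree : ℤ) - G.maxDegree)) = (Δ : ℤ) from by
          rw [← hDeq]; ring] at hl
        rw [c1, c2] at hl
        exact hl
    · -- excluded cases
      exfalso
      -- any exact alliance value `k` of `Gs` satisfies `k + (Δ* - Δ) ≤ Δ`
      have hkbound : ∀ (S : Finset W) (k : ℤ), Gs.IsExactAlliance S k →
          k + ((Gs.maxDegree : ℤ) - G.maxDegree) ≤ G.maxDegree := by
        intro S k hS
        by_contra hcon
        push_neg at hcon
        have hl := hladderZ k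
        rw [SimpleGraph.allianceCoeff_eq_zero_of_gt hcon] at hl
        have := SimpleGraph.one_le_allianceCoeff hS
        omega
      -- the component of a maximum-degree vertex has minimum degree at least one
      obtain ⟨v0, hv0⟩ := Gs.exists_maximal_degree_vertex
      obtain ⟨k0, hall0, ⟨w0, hw0, hk0⟩, hmin0⟩ :=
        SimpleGraph.compFinset_alliance (G := Gs) (Gs.connectedComponentMk v0)
      have hk0pos : 1 ≤ k0 := by
        have hw0deg : 1 ≤ Gs.degree w0 := by
          rcases eq_or_ne w0 v0 with rfl | hne
          · omega
          · have hmk : Gs.connectedComponentMk w0 = Gs.connectedComponentMk v0 :=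
              SimpleGraph.mem_compFinset.mp hw0
            obtain ⟨p⟩ := SimpleGraph.ConnectedComponent.exact hmk
            cases p with
            | nil => exact absurd rfl hne
            | cons hadj q =>
              exact (Gs.degree_pos_iff_exists_adj w0).mpr ⟨_, hadj⟩
        omega
      have hdd := hkbound _ k0 hall0
      exact hard_cases_false G Gs Δ hΔ hreg hladderZ hDlt halign hbot (by omega)
end

section
/- Let G₁ be a finite simple graph with minimum degree δ₁ and maximum degree Δ₁, let n ≥ 3 be a natural number, and assume G₁ has order n₁ > n with exactly n vertices of degree Δ₁, and that the alliance polynomial A(G₁;x) is symmetric (an even or odd function of x). Then: (1) if δ₁ = 1, then A(G₁;x) is not a monic polynomial of degree 2n − n₁ + Δ₁; (2) if δ₁ = 2, then either 2n₁ < 2Δ₁ + n or A(G₁;x) is not a monic polynomial of degree 2n − n₁ + Δ₁. -/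
open Polynomial Finset

set_option linter.unusedSectionVars false

section AuxAlliance

variable {W : Type*} [Fintype W] [DecidableEq W] (G : SimpleGraph W) [DecidableRel G.Adj]

lemma aux_degIn_add_degOut (S : Finset W) (v : W) :
    G.degIn S v + G.degOut S v = G.degree v := by
  classical
  have hdeg : G.degree v = (Finset.univ.filter (fun u => G.Adj v u)).card := by
    rw [SimpleGraph.degree, SimpleGraph.neighborFinset_eq_filter]
  rw [SimpleGraph.degIn, SimpleGraph.degOut, hdeg, ← Finset.card_union_of_disjoint
    (Finset.disjoint_filter_filter disjoint_compl_right), ← Finset.filter_union,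
    Finset.union_compl]

lemma aux_diff_le (S : Finset W) (v : W) :
    (G.degIn S v : ℤ) - (G.degOut S v : ℤ) ≤ G.degree v := by
  have := aux_degIn_add_degOut G S v
  omega

lemma aux_neg_le_diff (S : Finset W) (v : W) :
    -(G.degree v : ℤ) ≤ (G.degIn S v : ℤ) - (G.degOut S v : ℤ) := by
  have := aux_degIn_add_degOut G S v
  omega

lemma aux_singleton_alliance (v : W) :
    G.IsExactAlliance {v} (-(G.degree v : ℤ)) := by
  have hIn : G.degIn {v} v = 0 := by
    simp [SimpleGraph.degIn, Finset.filter_singleton, G.irrefl]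
  have hOut : G.degOut {v} v = G.degree v := by
    have := aux_degIn_add_degOut G {v} v
    omega
  refine ⟨?_, ?_, ⟨v, Finset.mem_singleton_self v, by rw [hIn, hOut]; push_cast; ring⟩⟩
  · rw [SimpleGraph.connected_iff]
    constructor
    · intro a b
      have ha : a = b := by
        ext
        have h1 : (a : W) ∈ ({v} : Finset W) := a.2
        have h2 : (b : W) ∈ ({v} : Finset W) := b.2
        simp only [Finset.mem_singleton] at h1 h2
        rw [h1, h2]
      rw [ha]
    · exact ⟨⟨v, by simp⟩⟩
  · intro u hu
    rw [Finset.mem_singleton] at hu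
    subst hu
    rw [hIn, hOut]
    omega
open Relation in
lemma aux_exists_closed_connected (U : Finset W) (u : W) (hu : u ∈ U) :
    ∃ S : Finset W, S ⊆ U ∧ u ∈ S ∧ (G.induce (S : Set W)).Connected ∧
      ∀ w ∈ S, ∀ y ∈ U, G.Adj w y → y ∈ S := by
  classical
  set R : W → W → Prop := fun a b => b ∈ U ∧ G.Adj a b with hR
  set S : Finset W := U.filter (fun w => ReflTransGen R u w) with hS
  have huS : u ∈ S := by
    rw [hS, Finset.mem_filter]
    exact ⟨hu, ReflTransGen.refl⟩
  have hSU : S ⊆ U := Finset.filter_subset _ _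
  have hclosed : ∀ w ∈ S, ∀ y ∈ U, G.Adj w y → y ∈ S := by
    intro w hw y hy hadj
    rw [hS, Finset.mem_filter] at hw ⊢
    exact ⟨hy, hw.2.tail ⟨hy, hadj⟩⟩
  refine ⟨S, hSU, huS, ?_, hclosed⟩
  have huS' : u ∈ (S : Set W) := huS
  have key : ∀ v, ReflTransGen R u v →
      ∃ hv : v ∈ (S : Set W), (G.induce (S : Set W)).Reachable ⟨u, huS'⟩ ⟨v, hv⟩ := by
    intro v h
    induction h with
    | refl => exact ⟨huS', SimpleGraph.Reachable.refl _⟩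
    | @tail b c hub hbc ih =>
      obtain ⟨hbS, hreach⟩ := ih
      have hcS : c ∈ S := hclosed b hbS c hbc.1 hbc.2
      have hadj : (G.induce (S : Set W)).Adj ⟨b, hbS⟩ ⟨c, hcS⟩ := hbc.2
      exact ⟨hcS, hreach.trans hadj.reachable⟩
  rw [SimpleGraph.connected_iff_exists_forall_reachable]
  refine ⟨⟨u, huS'⟩, ?_⟩
  rintro ⟨v, hv⟩
  have hv' : v ∈ S := hv
  rw [hS, Finset.mem_filter] at hv'
  obtain ⟨hvmem, hreach⟩ := key v hv'.2
  exact hreach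

lemma aux_coeff_alliancePoly (hΔ : G.maxDegree < Fintype.card W) (j : ℤ)
    (hj : j ∈ Finset.Icc (-(G.maxDegree : ℤ)) (G.maxDegree : ℤ)) :
    G.alliancePoly.coeff (((Fintype.card W : ℤ) + j).toNat) = G.allianceCoeff j := by
  rw [SimpleGraph.alliancePoly, Polynomial.finset_sum_coeff]
  rw [Finset.sum_eq_single j]
  · simp [Polynomial.coeff_smul, Polynomial.coeff_X_pow]
  · intro k hk hkj
    rw [Finset.mem_Icc] at hk hj
    have hne : ((Fintype.card W : ℤ) + j).toNat ≠ ((Fintype.card W : ℤ) + k).toNat := by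
      omega
    simp [Polynomial.coeff_smul, Polynomial.coeff_X_pow, hne]
  · intro h
    exact absurd hj h

lemma aux_alliance_of_connected' (S : Finset W) (hne : S.Nonempty)
    (hc : (G.induce (S : Set W)).Connected) :
    G.IsExactAlliance S
      (S.inf' hne (fun v => (G.degIn S v : ℤ) - (G.degOut S v : ℤ))) := by
  refine ⟨hc, fun v hv => Finset.inf'_le _ hv, ?_⟩
  obtain ⟨v, hv, hval⟩ := Finset.exists_mem_eq_inf' hne
    (fun v => (G.degIn S v : ℤ) - (G.degOut S v : ℤ))
  exact ⟨v, hv, hval.symm⟩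

lemma aux_good_set (B : Finset W) (u : W) (hu : u ∈ B) (m : ℕ)
    (hdegB : ∀ w ∈ B, G.degree w = G.maxDegree)
    (hbound : ∀ w ∈ B, ((Finset.univ.filter (fun y => G.Adj w y)) \ B).card ≤ m) :
    ∃ S : Finset W, S ⊆ B ∧ u ∈ S ∧ S.Nonempty ∧ (G.induce (S : Set W)).Connected ∧
      ∀ w ∈ S, (G.maxDegree : ℤ) - 2 * (m : ℤ) ≤ (G.degIn S w : ℤ) - (G.degOut S w : ℤ) := by
  obtain ⟨S, hSB, huS, hconn, hcl⟩ := aux_exists_closed_connected G B u hu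
  refine ⟨S, hSB, huS, ⟨u, huS⟩, hconn, ?_⟩
  intro w hw
  have hout : G.degOut S w ≤ m := by
    refine le_trans (Finset.card_le_card ?_) (hbound w (hSB hw))
    intro y hy
    rw [Finset.mem_filter, Finset.mem_compl] at hy
    rw [Finset.mem_sdiff, Finset.mem_filter]
    exact ⟨⟨Finset.mem_univ y, hy.2⟩, fun hyB => hy.1 (hcl w hw y hyB hy.2)⟩
  have hsum := aux_degIn_add_degOut G S w
  have hdw : G.degree w = G.maxDegree := hdegB w (hSB hw)
  omega

lemma aux_two_sets (K : ℤ) (S₁ S₂ : Finset W) (hne : S₁ ≠ S₂)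
    (h₁ : S₁.Nonempty) (hc₁ : (G.induce (S₁ : Set W)).Connected)
    (hb₁ : ∀ w ∈ S₁, K ≤ (G.degIn S₁ w : ℤ) - (G.degOut S₁ w : ℤ))
    (h₂ : S₂.Nonempty) (hc₂ : (G.induce (S₂ : Set W)).Connected)
    (hb₂ : ∀ w ∈ S₂, K ≤ (G.degIn S₂ w : ℤ) - (G.degOut S₂ w : ℤ))
    (hA1 : G.allianceCoeff K = 1)
    (hA0 : ∀ j : ℤ, K < j → j ≤ (G.maxDegree : ℤ) → G.allianceCoeff j = 0) : False := by
  have mk : ∀ S : Finset W, S.Nonempty → (G.induce (S : Set W)).Connected →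
      (∀ w ∈ S, K ≤ (G.degIn S w : ℤ) - (G.degOut S w : ℤ)) → G.IsExactAlliance S K := by
    intro S hSne hSc hSb
    have hall := aux_alliance_of_connected' G S hSne hSc
    set k := S.inf' hSne (fun v => (G.degIn S v : ℤ) - (G.degOut S v : ℤ)) with hk
    have hKk : K ≤ k := Finset.le_inf' hSne _ hSb
    rcases eq_or_lt_of_le hKk with he | hlt
    · rwa [← he] at hall
    · exfalso
      have hkΔ : k ≤ (G.maxDegree : ℤ) := by
        obtain ⟨v, hv, hval⟩ := Finset.exists_mem_eq_inf' hSne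
          (fun v => (G.degIn S v : ℤ) - (G.degOut S v : ℤ))
        rw [hk, hval]
        refine le_trans (aux_diff_le G S v) ?_
        exact_mod_cast G.degree_le_maxDegree v
      have h0 := hA0 k hlt hkΔ
      rw [SimpleGraph.allianceCoeff, Set.ncard_eq_zero (Set.toFinite _)] at h0
      have hmem : S ∈ {T : Finset W | G.IsExactAlliance T k} := hall
      rw [h0] at hmem
      exact hmem
  have m₁ := mk S₁ h₁ hc₁ hb₁
  have m₂ := mk S₂ h₂ hc₂ hb₂
  have hlt : 1 < ({S : Finset W | G.IsExactAlliance S K}).ncard := by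
    rw [Set.one_lt_ncard (Set.toFinite _)]
    exact ⟨S₁, m₁, S₂, m₂, hne⟩
  rw [show ({S : Finset W | G.IsExactAlliance S K}).ncard = G.allianceCoeff K from rfl,
    hA1] at hlt
  exact lt_irrefl 1 hlt

lemma aux_comb (n : ℕ) (hn : 3 ≤ n) (hn₁ : n < Fintype.card W)
    (hmax : (Finset.univ.filter (fun v : W => G.degree v = G.maxDegree)).card = n)
    (hδ : G.minDegree = 1 ∨
      (G.minDegree = 2 ∧ 2 * G.maxDegree + n ≤ 2 * Fintype.card W))
    (hA1 : G.allianceCoeff ((G.maxDegree : ℤ) - 2 * ((Fintype.card W : ℤ) - n)) = 1)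
    (hA0 : ∀ j : ℤ, (G.maxDegree : ℤ) - 2 * ((Fintype.card W : ℤ) - n) < j →
      j ≤ (G.maxDegree : ℤ) → G.allianceCoeff j = 0) : False := by
  classical
  set Δ := G.maxDegree with hΔdef
  set bigs : Finset W := Finset.univ.filter (fun v : W => G.degree v = Δ) with hbigs
  set smalls : Finset W := bigsᶜ with hsmalls
  set m : ℕ := smalls.card with hm
  have hbigsn : bigs.card = n := hmax
  have hmn : n + m = Fintype.card W := by
    rw [hm, hsmalls, Finset.card_compl, hbigsn]
    omega
  have hm1 : 1 ≤ m := by omega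
  have hKm : (Δ : ℤ) - 2 * (m : ℤ) = (Δ : ℤ) - 2 * ((Fintype.card W : ℤ) - n) := by
    have : (m : ℤ) = (Fintype.card W : ℤ) - n := by
      omega
    rw [this]
  rw [← hKm] at hA1 hA0
  have hdegbigs : ∀ w ∈ bigs, G.degree w = Δ := by
    intro w hw
    rw [hbigs, Finset.mem_filter] at hw
    exact hw.2
  have hmem_smalls : ∀ y : W, y ∈ smalls ↔ ¬ (G.degree y = Δ) := by
    intro y
    rw [hsmalls, Finset.mem_compl, hbigs, Finset.mem_filter]
    simp
  -- the main reduction: a good removal set X yields a contradiction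
  have hboundbigs : ∀ w ∈ bigs,
      ((Finset.univ.filter (fun y => G.Adj w y)) \ bigs).card ≤ m := by
    intro w _
    refine le_trans (Finset.card_le_card ?_) (le_of_eq hm.symm)
    intro y hy
    rw [Finset.mem_sdiff] at hy
    rw [hsmalls, Finset.mem_compl]
    exact hy.2
  have main : ∀ X : Finset W, X ⊆ bigs → X.Nonempty → (bigs \ X).Nonempty →
      (∀ w ∈ bigs \ X, (smalls.filter (fun y => G.Adj w y)).card +
        (X.filter (fun y => G.Adj w y)).card ≤ m) → False := by
    intro X hXb hXne hBXne hbound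
    obtain ⟨x₀, hx₀⟩ := hXne
    obtain ⟨u₂, hu₂⟩ := hBXne
    obtain ⟨S₁, hS₁B, hx₀S₁, hS₁ne, hS₁c, hS₁b⟩ :=
      aux_good_set G bigs x₀ (hXb hx₀) m hdegbigs hboundbigs
    have hdegBX : ∀ w ∈ bigs \ X, G.degree w = Δ := by
      intro w hw
      exact hdegbigs w (Finset.mem_sdiff.mp hw).1
    have hboundBX : ∀ w ∈ bigs \ X,
        ((Finset.univ.filter (fun y => G.Adj w y)) \ (bigs \ X)).card ≤ m := by
      intro w hw
      refine le_trans (le_trans (Finset.card_le_card ?_) (Finset.card_union_le _ _))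
        (hbound w hw)
      intro y hy
      rw [Finset.mem_sdiff, Finset.mem_filter, Finset.mem_sdiff] at hy
      obtain ⟨⟨-, hadj⟩, hyn⟩ := hy
      rw [Finset.mem_union, Finset.mem_filter, Finset.mem_filter]
      by_cases hybigs : y ∈ bigs
      · right
        refine ⟨?_, hadj⟩
        by_contra hyX
        exact hyn ⟨hybigs, hyX⟩
      · left
        refine ⟨?_, hadj⟩
        rw [hsmalls, Finset.mem_compl]
        exact hybigs
    obtain ⟨S₂, hS₂B, hu₂S₂, hS₂ne, hS₂c, hS₂b⟩ :=
      aux_good_set G (bigs \ X) u₂ hu₂ m hdegBX hboundBX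
    have hne : S₁ ≠ S₂ := by
      intro h
      have : x₀ ∈ S₂ := h ▸ hx₀S₁
      have := hS₂B this
      rw [Finset.mem_sdiff] at this
      exact this.2 hx₀
    exact aux_two_sets G ((Δ : ℤ) - 2 * (m : ℤ)) S₁ S₂ hne hS₁ne hS₁c hS₁b hS₂ne hS₂c hS₂b
      hA1 hA0
  -- basic vertex facts
  have hWne : Nonempty W := by
    rw [← Fintype.card_pos_iff]
    omega
  obtain ⟨v₀, hv₀⟩ := G.exists_minimal_degree_vertex
  have hδ12 : G.minDegree = 1 ∨ G.minDegree = 2 := by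
    rcases hδ with h | h
    · exact Or.inl h
    · exact Or.inr h.1
  have hδΔ : G.minDegree < Δ := by
    have : smalls.Nonempty := Finset.card_pos.mp (by omega)
    obtain ⟨x, hx⟩ := this
    have hxd : G.degree x ≠ Δ := (hmem_smalls x).mp hx
    have h1 := G.minDegree_le_degree x
    have h2 := G.degree_le_maxDegree x
    omega
  have hv₀smalls : v₀ ∈ smalls := by
    rw [hmem_smalls]
    omega
  set W₀ : Finset W := bigs.filter (fun w => ∀ x ∈ smalls, G.Adj w x) with hW₀
  have hW₀bigs : W₀ ⊆ bigs := Finset.filter_subset _ _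
  have hW₀card : W₀.card ≤ G.minDegree := by
    have hsub : W₀ ⊆ Finset.univ.filter (fun y => G.Adj v₀ y) := by
      intro w hw
      rw [hW₀, Finset.mem_filter] at hw
      rw [Finset.mem_filter]
      exact ⟨Finset.mem_univ w, (hw.2 v₀ hv₀smalls).symm⟩
    have hdv : G.degree v₀ = (Finset.univ.filter (fun u => G.Adj v₀ u)).card := by
      rw [SimpleGraph.degree, SimpleGraph.neighborFinset_eq_filter]
    have := Finset.card_le_card hsub
    omega
  have hsmall_lt : ∀ w ∈ bigs, w ∉ W₀ →
      (smalls.filter (fun y => G.Adj w y)).card + 1 ≤ m := by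
    intro w hwb hwn
    have hnall : ¬ ∀ x ∈ smalls, G.Adj w x := by
      intro h
      exact hwn (by rw [hW₀, Finset.mem_filter]; exact ⟨hwb, h⟩)
    push_neg at hnall
    obtain ⟨x, hxs, hxn⟩ := hnall
    have hsub : smalls.filter (fun y => G.Adj w y) ⊆ smalls.erase x := by
      intro y hy
      rw [Finset.mem_filter] at hy
      rw [Finset.mem_erase]
      exact ⟨fun h => hxn (h ▸ hy.2), hy.1⟩
    have := Finset.card_le_card hsub
    rw [Finset.card_erase_of_mem hxs] at this
    omega
  have hsmall_le : ∀ w : W, (smalls.filter (fun y => G.Adj w y)).card ≤ m :=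
    fun w => le_trans (Finset.card_le_card (Finset.filter_subset _ _)) (le_of_eq hm.symm)
  -- case analysis
  by_cases hW2 : W₀.card ≤ 1
  · -- a single (or no) vertex adjacent to all smalls
    obtain ⟨w₁, hw₁bigs, hw₁⟩ : ∃ w₁ ∈ bigs, W₀ ⊆ {w₁} := by
      rcases W₀.eq_empty_or_nonempty with he | ⟨w, hw⟩
      · have : bigs.Nonempty := Finset.card_pos.mp (by omega)
        obtain ⟨w, hw⟩ := this
        exact ⟨w, hw, by rw [he]; exact Finset.empty_subset _⟩
      · refine ⟨w, hW₀bigs hw, ?_⟩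
        intro y hy
        rw [Finset.mem_singleton]
        by_contra hne
        have : 1 < W₀.card := Finset.one_lt_card.mpr ⟨y, hy, w, hw, hne⟩
        omega
    have hXsub : ({w₁} : Finset W) ⊆ bigs := by
      intro y hy
      rw [Finset.mem_singleton] at hy
      rw [hy]
      exact hw₁bigs
    refine main {w₁} hXsub ⟨w₁, Finset.mem_singleton_self w₁⟩ ?_ ?_
    · obtain ⟨y, hy, hyne⟩ := Finset.exists_mem_ne (by omega : 1 < bigs.card) w₁
      exact ⟨y, Finset.mem_sdiff.mpr ⟨hy, by rw [Finset.mem_singleton]; exact hyne⟩⟩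
    · intro w hw
      rw [Finset.mem_sdiff, Finset.mem_singleton] at hw
      have hwn : w ∉ W₀ := fun h => hw.2 (Finset.mem_singleton.mp (hw₁ h))
      have h1 := hsmall_lt w hw.1 hwn
      have h2 : (({w₁} : Finset W).filter (fun y => G.Adj w y)).card ≤ 1 := by
        refine le_trans (Finset.card_le_card (Finset.filter_subset _ _)) ?_
        rw [Finset.card_singleton]
      omega
  · -- two vertices a, b adjacent to all smalls: forces minDegree = 2
    have hδ2 : G.minDegree = 2 ∧ 2 * Δ + n ≤ 2 * Fintype.card W := by
      rcases hδ with h | h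
      · omega
      · exact h
    have hc2 : W₀.card = 2 := by omega
    obtain ⟨a, b, hab, hW₀eq⟩ := Finset.card_eq_two.mp hc2
    have haW₀ : a ∈ W₀ := by rw [hW₀eq]; exact Finset.mem_insert_self a {b}
    have hbW₀ : b ∈ W₀ := by rw [hW₀eq]; exact Finset.mem_insert_of_mem (Finset.mem_singleton_self b)
    have habigs : a ∈ bigs := hW₀bigs haW₀
    have hbbigs : b ∈ bigs := hW₀bigs hbW₀
    have haall : ∀ x ∈ smalls, G.Adj a x := by
      have := Finset.mem_filter.mp haW₀
      exact this.2
    have hball : ∀ x ∈ smalls, G.Adj b x := by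
      have := Finset.mem_filter.mp hbW₀
      exact this.2
    by_cases hadj : G.Adj a b
    · by_cases hex : ∃ x ∈ bigs, x ≠ a ∧ x ≠ b ∧ ¬ G.Adj a x ∧ ¬ G.Adj b x
      · obtain ⟨x, hxbigs, hxa, hxb, hnax, hnbx⟩ := hex
        refine main {x} (by intro y hy; rw [Finset.mem_singleton] at hy; rw [hy]; exact hxbigs)
          ⟨x, Finset.mem_singleton_self x⟩ ⟨a, Finset.mem_sdiff.mpr ⟨habigs, by
            rw [Finset.mem_singleton]; exact fun h => hxa h.symm⟩⟩ ?_
        intro w hw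
        rw [Finset.mem_sdiff, Finset.mem_singleton] at hw
        by_cases hwab : w = a ∨ w = b
        · have hXf : (({x} : Finset W).filter (fun y => G.Adj w y)).card = 0 := by
            rw [Finset.card_eq_zero, Finset.filter_singleton]
            rcases hwab with h | h <;> rw [h] <;> simp [hnax, hnbx]
          have := hsmall_le w
          omega
        · push_neg at hwab
          have hwn : w ∉ W₀ := by
            rw [hW₀eq]
            intro h
            rcases Finset.mem_insert.mp h with h | h
            · exact hwab.1 h
            · exact hwab.2 (Finset.mem_singleton.mp h)
          have h1 := hsmall_lt w hw.1 hwn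
          have h2 : (({x} : Finset W).filter (fun y => G.Adj w y)).card ≤ 1 := by
            refine le_trans (Finset.card_le_card (Finset.filter_subset _ _)) ?_
            rw [Finset.card_singleton]
          omega
      · -- neighborhoods of a and b inside bigs are disjoint and cover bigs
        push_neg at hex
        set Na : Finset W := bigs.filter (fun y => G.Adj a y) with hNa
        set Nb : Finset W := bigs.filter (fun y => G.Adj b y) with hNb
        have hsplit : ∀ c : W, c ∈ bigs → (∀ x ∈ smalls, G.Adj c x) →
            (bigs.filter (fun y => G.Adj c y)).card + m = Δ := by
          intro c hcbigs hcall
          have hdc : G.degree c = (Finset.univ.filter (fun u => G.Adj c u)).card := by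
            rw [SimpleGraph.degree, SimpleGraph.neighborFinset_eq_filter]
          have hsp : (Finset.univ.filter (fun u => G.Adj c u)).card =
              (bigs.filter (fun y => G.Adj c y)).card +
              (smalls.filter (fun y => G.Adj c y)).card := by
            rw [← Finset.card_union_of_disjoint
              (Finset.disjoint_filter_filter (by rw [hsmalls]; exact disjoint_compl_right)),
              ← Finset.filter_union, hsmalls, Finset.union_compl]
          have hfs : smalls.filter (fun y => G.Adj c y) = smalls :=
            Finset.filter_true_of_mem hcall
          have hdΔ := hdegbigs c hcbigs
          rw [hfs] at hsp
          omega
        have hNacard : Na.card + m = Δ := hsplit a habigs haall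
        have hNbcard : Nb.card + m = Δ := hsplit b hbbigs hball
        have hsub : bigs ⊆ Na ∪ Nb := by
          intro x hx
          rw [Finset.mem_union]
          by_cases hxa : x = a
          · subst hxa
            exact Or.inr (Finset.mem_filter.mpr ⟨hx, hadj.symm⟩)
          · by_cases hxb : x = b
            · subst hxb
              exact Or.inl (Finset.mem_filter.mpr ⟨hx, hadj⟩)
            · by_cases h1 : G.Adj a x
              · exact Or.inl (Finset.mem_filter.mpr ⟨hx, h1⟩)
              · exact Or.inr (Finset.mem_filter.mpr ⟨hx, hex x hx hxa hxb h1⟩)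
        have hdisj : (Na ∩ Nb).card = 0 := by
          have h1 := Finset.card_union_add_card_inter Na Nb
          have h2 := Finset.card_le_card hsub
          have h3 : (Na ∪ Nb).card ≤ n := by
            have hsub2 : Na ∪ Nb ⊆ bigs := by
              intro y hy
              rcases Finset.mem_union.mp hy with h | h
              · exact (Finset.mem_filter.mp h).1
              · exact (Finset.mem_filter.mp h).1
            have := Finset.card_le_card hsub2
            omega
          have := hδ2.2
          omega
        have hdisj' : ∀ w : W, ¬ (G.Adj w a ∧ G.Adj w b) ∨ w ∉ bigs := by
          intro w
          by_cases hwbigs : w ∈ bigs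
          · left
            rintro ⟨h1, h2⟩
            have : w ∈ Na ∩ Nb := Finset.mem_inter.mpr
              ⟨Finset.mem_filter.mpr ⟨hwbigs, h1.symm⟩, Finset.mem_filter.mpr ⟨hwbigs, h2.symm⟩⟩
            rw [Finset.card_eq_zero] at hdisj
            rw [hdisj] at this
            exact absurd this (Finset.notMem_empty w)
          · right
            exact hwbigs
        have hXsub : ({a, b} : Finset W) ⊆ bigs := by
          intro y hy
          rcases Finset.mem_insert.mp hy with h | h
          · rw [h]; exact habigs
          · rw [Finset.mem_singleton.mp h]; exact hbbigs
        refine main {a, b} hXsub ⟨a, Finset.mem_insert_self a {b}⟩ ?_ ?_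
        · have hns : ¬ bigs ⊆ {a, b} := by
            intro h
            have := Finset.card_le_card h
            have hcab : ({a, b} : Finset W).card ≤ 2 := Finset.card_insert_le a {b}
            omega
          obtain ⟨y, hy, hyn⟩ := Finset.not_subset.mp hns
          exact ⟨y, Finset.mem_sdiff.mpr ⟨hy, hyn⟩⟩
        · intro w hw
          rw [Finset.mem_sdiff] at hw
          have hwn : w ∉ W₀ := by
            rw [hW₀eq]
            exact hw.2
          have h1 := hsmall_lt w hw.1 hwn
          have h2 : (({a, b} : Finset W).filter (fun y => G.Adj w y)).card ≤ 1 := by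
            have hnot : ¬ (G.Adj w a ∧ G.Adj w b) := by
              rcases hdisj' w with h | h
              · exact h
              · exact absurd hw.1 h
            rw [show ({a, b} : Finset W) = insert a {b} from rfl, Finset.filter_insert,
              Finset.filter_singleton]
            by_cases ha' : G.Adj w a <;> by_cases hb' : G.Adj w b <;>
              simp [ha', hb'] <;> tauto
          omega
    · -- a and b not adjacent: remove a
      refine main {a} (by intro y hy; rw [Finset.mem_singleton] at hy; rw [hy]; exact habigs)
        ⟨a, Finset.mem_singleton_self a⟩
        ⟨b, Finset.mem_sdiff.mpr ⟨hbbigs, by rw [Finset.mem_singleton]; exact fun h => hab h.symm⟩⟩ ?_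
      intro w hw
      rw [Finset.mem_sdiff, Finset.mem_singleton] at hw
      by_cases hwb : w = b
      · subst hwb
        have hba : ¬ G.Adj w a := fun h => hadj h.symm
        have hXf : (({a} : Finset W).filter (fun y => G.Adj w y)).card = 0 := by
          rw [Finset.card_eq_zero, Finset.filter_singleton, if_neg hba]
        have := hsmall_le w
        omega
      · have hwn : w ∉ W₀ := by
          rw [hW₀eq]
          intro h
          rcases Finset.mem_insert.mp h with h | h
          · exact hw.2 h
          · exact hwb (Finset.mem_singleton.mp h)
        have h1 := hsmall_lt w hw.1 hwn
        have h2 : (({a} : Finset W).filter (fun y => G.Adj w y)).card ≤ 1 := by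
          refine le_trans (Finset.card_le_card (Finset.filter_subset _ _)) ?_
          rw [Finset.card_singleton]
        omega

end AuxAlliance

/-- Let `G₁` have order `n₁ > n ≥ 3` with exactly `n` vertices of maximum degree
`Δ₁` and symmetric alliance polynomial. If `δ₁ = 1` then `A(G₁;x)` is not a monic polynomial
of degree `2n - n₁ + Δ₁`; if `δ₁ = 2` then `2n₁ < 2Δ₁ + n` or `A(G₁;x)` is not a monic
polynomial of degree `2n - n₁ + Δ₁`. -/
theorem alliancePoly_not_monic_of_small_minDegree
    {W : Type*} [Fintype W] [DecidableEq W]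
    (G₁ : SimpleGraph W) [DecidableRel G₁.Adj] (n : ℕ) (hn : 3 ≤ n)
    (hn₁ : n < Fintype.card W)
    (hmax : (Finset.univ.filter (fun v : W => G₁.degree v = G₁.maxDegree)).card = n)
    (hsym : (∀ x : ℝ, G₁.alliancePoly.eval (-x) = G₁.alliancePoly.eval x) ∨
      (∀ x : ℝ, G₁.alliancePoly.eval (-x) = -G₁.alliancePoly.eval x)) :
    (G₁.minDegree = 1 →
      ¬(G₁.alliancePoly.Monic ∧
        (G₁.alliancePoly.natDegree : ℤ) =
          2 * (n : ℤ) - (Fintype.card W : ℤ) + (G₁.maxDegree : ℤ))) ∧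
    (G₁.minDegree = 2 →
      (2 * Fintype.card W < 2 * G₁.maxDegree + n ∨
        ¬(G₁.alliancePoly.Monic ∧
          (G₁.alliancePoly.natDegree : ℤ) =
            2 * (n : ℤ) - (Fintype.card W : ℤ) + (G₁.maxDegree : ℤ)))) := by
  classical
  have key : (G₁.minDegree = 1 ∨
      (G₁.minDegree = 2 ∧ 2 * G₁.maxDegree + n ≤ 2 * Fintype.card W)) →
      ¬(G₁.alliancePoly.Monic ∧
        (G₁.alliancePoly.natDegree : ℤ) =
          2 * (n : ℤ) - (Fintype.card W : ℤ) + (G₁.maxDegree : ℤ)) := by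
    intro hδ'
    rintro ⟨hmon, hdeg⟩
    have hWne : Nonempty W := Fintype.card_pos_iff.mp (by omega)
    have hΔlt : G₁.maxDegree < Fintype.card W := by
      obtain ⟨v, hv⟩ := G₁.exists_maximal_degree_vertex
      exact hv ▸ G₁.degree_lt_card_verts v
    set K : ℤ := (G₁.maxDegree : ℤ) - 2 * ((Fintype.card W : ℤ) - n) with hK
    have hdeg' : (G₁.alliancePoly.natDegree : ℤ) = (Fintype.card W : ℤ) + K := by
      rw [hK]; omega
    have hA2 : 2 ≤ G₁.allianceCoeff (-(G₁.maxDegree : ℤ)) := by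
      obtain ⟨v, hv, w, hw, hvw⟩ := Finset.one_lt_card.mp
        (by omega : 1 < (Finset.univ.filter (fun v : W => G₁.degree v = G₁.maxDegree)).card)
      have hvd : G₁.degree v = G₁.maxDegree := (Finset.mem_filter.mp hv).2
      have hwd : G₁.degree w = G₁.maxDegree := (Finset.mem_filter.mp hw).2
      have a1 := aux_singleton_alliance G₁ v
      have a2 := aux_singleton_alliance G₁ w
      rw [hvd] at a1
      rw [hwd] at a2
      have hlt2 : 1 < ({S : Finset W | G₁.IsExactAlliance S (-(G₁.maxDegree : ℤ))}).ncard := by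
        rw [Set.one_lt_ncard (Set.toFinite _)]
        exact ⟨{v}, a1, {w}, a2, fun h => hvw (Finset.singleton_injective h)⟩
      exact hlt2
    have hmemΔ : -(G₁.maxDegree : ℤ) ∈
        Finset.Icc (-(G₁.maxDegree : ℤ)) (G₁.maxDegree : ℤ) :=
      Finset.mem_Icc.mpr ⟨le_refl _, by omega⟩
    by_cases hK1 : K < -(G₁.maxDegree : ℤ)
    · have hne0 : G₁.alliancePoly.coeff
          (((Fintype.card W : ℤ) + (-(G₁.maxDegree : ℤ))).toNat) ≠ 0 := by
        rw [aux_coeff_alliancePoly G₁ hΔlt _ hmemΔ]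
        exact Nat.cast_ne_zero.mpr (by omega)
      have hle := Polynomial.le_natDegree_of_ne_zero hne0
      omega
    · push_neg at hK1
      by_cases hK2 : K = -(G₁.maxDegree : ℤ)
      · have hnd : G₁.alliancePoly.natDegree =
            ((Fintype.card W : ℤ) + (-(G₁.maxDegree : ℤ))).toNat := by
          omega
        have hc := hmon.coeff_natDegree
        rw [hnd, aux_coeff_alliancePoly G₁ hΔlt _ hmemΔ] at hc
        have : G₁.allianceCoeff (-(G₁.maxDegree : ℤ)) = 1 := by exact_mod_cast hc
        omega
      · have hKgt : -(G₁.maxDegree : ℤ) < K := lt_of_le_of_ne hK1 (Ne.symm hK2)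
        have hKle : K ≤ (G₁.maxDegree : ℤ) := by omega
        have hmemK : K ∈ Finset.Icc (-(G₁.maxDegree : ℤ)) (G₁.maxDegree : ℤ) :=
          Finset.mem_Icc.mpr ⟨le_of_lt hKgt, hKle⟩
        have hnd : G₁.alliancePoly.natDegree = (((Fintype.card W : ℤ) + K)).toNat := by
          omega
        have hA1 : G₁.allianceCoeff K = 1 := by
          have hc := hmon.coeff_natDegree
          rw [hnd, aux_coeff_alliancePoly G₁ hΔlt _ hmemK] at hc
          exact_mod_cast hc
        have hA0 : ∀ j : ℤ, K < j → j ≤ (G₁.maxDegree : ℤ) → G₁.allianceCoeff j = 0 := by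
          intro j hj1 hj2
          have hjI : j ∈ Finset.Icc (-(G₁.maxDegree : ℤ)) (G₁.maxDegree : ℤ) :=
            Finset.mem_Icc.mpr ⟨by omega, hj2⟩
          have hlt' : G₁.alliancePoly.natDegree < ((Fintype.card W : ℤ) + j).toNat := by
            omega
          have hz := Polynomial.coeff_eq_zero_of_natDegree_lt hlt'
          rw [aux_coeff_alliancePoly G₁ hΔlt _ hjI] at hz
          exact_mod_cast hz
        exact aux_comb G₁ n hn hn₁ hmax hδ' hA1 hA0
  constructor
  · intro h1
    exact key (Or.inl h1)
  · intro h2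
    by_cases hlt : 2 * Fintype.card W < 2 * G₁.maxDegree + n
    · exact Or.inl hlt
    · exact Or.inr (key (Or.inr ⟨h2, by omega⟩))
end
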